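/- arXiv:2209.12868 — 7 statements merged into one kernel-verified Lean document; each statement's English description precedes it below -/
import Mathlib

section
/- Φ_𝒩 is differentiable at every Θ ∈ ℝ^ℬ, and its gradient is ∇Φ_𝒩(Θ) = E_{ℓ∼γ}[H(Θ, ℓ)], the expectation of the one-hot vector at the γ-almost-surely unique maximizer of h ↦ Θ[h] + q(ℓ)[h] over ℬ (this expectation does not depend on the choice of measurable selection of maximizers). -/
open MeasureTheory ProbabilityTheory

/-- The product Gaussian measure `γ` on `ℝ^{𝒳×𝒜}` with i.i.d. `N(0,1)` coordinates. -/
noncomputable def gaussianPerturbation (X A : Type*) [Fintype X] [Fintype A] :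
    Measure ((X × A) → ℝ) :=
  Measure.pi fun _ : X × A => gaussianReal 0 1

/-- `Φ_𝒩(Θ) = E_{ℓ∼γ}[max_{h∈ℬ} (Θ[h] + q(ℓ)[h])]`. -/
noncomputable def PhiN {X A B : Type*} [Fintype X] [Fintype A] [Fintype B]
    (pol : B → X → A) (Θ : B → ℝ) : ℝ :=
  ∫ ℓ : (X × A) → ℝ, (⨆ h : B, (Θ h + ∑ x : X, ℓ (x, pol h x)))
    ∂(gaussianPerturbation X A)

section Aux

lemma aux_integrable_id_gaussian : Integrable (fun x : ℝ => x) (gaussianReal 0 1) := by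
  rw [gaussianReal_of_var_ne_zero 0 one_ne_zero,
    integrable_withDensity_iff (measurable_gaussianPDF 0 1)
      (Filter.Eventually.of_forall fun x => ENNReal.ofReal_lt_top)]
  have h : ∀ x : ℝ, x * (gaussianPDF 0 1 x).toReal
      = (Real.sqrt (2 * Real.pi))⁻¹ * (x ^ (1:ℝ) * Real.exp (-(1/2) * x ^ 2)) := by
    intro x
    rw [gaussianPDF_def, ENNReal.toReal_ofReal (gaussianPDFReal_nonneg _ _ _),
      gaussianPDFReal_def]
    push_cast
    rw [Real.rpow_one]
    ring_nf
  simp_rw [h]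
  exact (integrable_rpow_mul_exp_neg_mul_sq (by norm_num) (by norm_num)).const_mul _


lemma aux_measurePreserving_eval {ι : Type*} [Fintype ι] {α : ι → Type*}
    [∀ i, MeasurableSpace (α i)] (μ : ∀ i, Measure (α i))
    [∀ i, IsProbabilityMeasure (μ i)] (i : ι) :
    MeasurePreserving (Function.eval i) (Measure.pi μ) (μ i) := by
  classical
  refine ⟨measurable_pi_apply i, ?_⟩
  ext s hs
  rw [Measure.map_apply (measurable_pi_apply i) hs, ← Set.univ_pi_update_univ, Measure.pi_pi]
  rw [Finset.prod_eq_single i (fun j _ hj => by simp [Function.update_of_ne hj]) (by simp)]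
  simp

lemma aux_gaussian_interval (c t : ℝ) :
    gaussianReal 0 1 {s : ℝ | |s + c| ≤ t} ≤ ENNReal.ofReal (2 * t) := by
  have hset : {s : ℝ | |s + c| ≤ t} = Set.Icc (-c - t) (-c + t) := by
    ext s
    simp only [Set.mem_setOf_eq, abs_le, Set.mem_Icc]
    constructor <;> rintro ⟨h1, h2⟩ <;> constructor <;> linarith
  have hpdf : ∀ x : ℝ, gaussianPDF 0 1 x ≤ 1 := by
    intro x
    rw [gaussianPDF_def, ← ENNReal.ofReal_one]
    apply ENNReal.ofReal_le_ofReal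
    rw [gaussianPDFReal_def]
    have h1 : Real.sqrt (2 * Real.pi * 1) ≥ 1 := by
      rw [show (2 : ℝ) * Real.pi * 1 = 2 * Real.pi by ring]
      rw [show (1:ℝ) = Real.sqrt 1 by simp]
      exact Real.sqrt_le_sqrt (by nlinarith [Real.pi_gt_three])
    have h2 : Real.exp (-(x - 0) ^ 2 / (2 * 1)) ≤ 1 := by
      apply Real.exp_le_one_iff.mpr
      have : (0:ℝ) ≤ (x - 0)^2 := sq_nonneg _
      have := div_nonneg this (by norm_num : (0:ℝ) ≤ 2*1)
      linarith
    exact mul_le_one₀ (inv_le_one_of_one_le₀ h1) (Real.exp_nonneg _) h2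
  rw [hset, gaussianReal_apply 0 one_ne_zero]
  calc ∫⁻ x in Set.Icc (-c - t) (-c + t), gaussianPDF 0 1 x
      ≤ ∫⁻ _ in Set.Icc (-c - t) (-c + t), 1 := lintegral_mono fun x => hpdf x
    _ = volume (Set.Icc (-c - t) (-c + t)) := by rw [setLIntegral_const, one_mul]
    _ = ENNReal.ofReal (2 * t) := by rw [Real.volume_Icc]; congr 1; ring

lemma aux_pair_bound {X A : Type*} [Fintype X] [Fintype A]
    {a b : X → A} (x₀ : X) (hx : a x₀ ≠ b x₀) (c t : ℝ) :
    (Measure.pi fun _ : X × A => gaussianReal 0 1)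
      {ℓ : (X × A) → ℝ | |(∑ x : X, ℓ (x, a x)) - (∑ x : X, ℓ (x, b x)) + c| ≤ t}
      ≤ ENNReal.ofReal (2 * t) := by
  classical
  set i₀ : X × A := (x₀, a x₀) with hi₀
  have hne_a : ∀ x : X, x ≠ x₀ → (x, a x) ≠ i₀ := fun x hx' h => hx' (congrArg Prod.fst h)
  have hne_b : ∀ x : X, (x, b x) ≠ i₀ := by
    intro x h
    have h1 : x = x₀ := congrArg Prod.fst h
    subst h1
    exact hx (congrArg Prod.snd h).symm
  set p : X × A → Prop := fun i => i ≠ i₀ with hp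
  haveI : Unique {i // ¬ p i} :=
    ⟨⟨⟨i₀, by simp [hp]⟩⟩, fun j => Subtype.ext (by simpa [hp] using j.2)⟩
  set e := MeasurableEquiv.piEquivPiSubtypeProd (fun _ : X × A => ℝ) p with he
  have hmp := measurePreserving_piEquivPiSubtypeProd (fun _ : X × A => gaussianReal 0 1) p
  set F : ((X × A) → ℝ) → ℝ :=
    fun ℓ => (∑ x : X, ℓ (x, a x)) - (∑ x : X, ℓ (x, b x)) + c with hF
  have hFm : Measurable F := by
    have m1 : Measurable fun ℓ : (X × A) → ℝ => ∑ x : X, ℓ (x, a x) :=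
      Finset.measurable_sum Finset.univ fun x _ => measurable_pi_apply (x, a x)
    have m2 : Measurable fun ℓ : (X × A) → ℝ => ∑ x : X, ℓ (x, b x) :=
      Finset.measurable_sum Finset.univ fun x _ => measurable_pi_apply (x, b x)
    exact (m1.sub m2).add measurable_const
  have hS : MeasurableSet {ℓ : (X × A) → ℝ | |F ℓ| ≤ t} :=
    measurableSet_le hFm.abs measurable_const
  have hT : MeasurableSet (e.symm ⁻¹' {ℓ : (X × A) → ℝ | |F ℓ| ≤ t}) :=
    e.symm.measurable hS
  have hpre : e ⁻¹' (e.symm ⁻¹' {ℓ : (X × A) → ℝ | |F ℓ| ≤ t})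
      = {ℓ : (X × A) → ℝ | |F ℓ| ≤ t} := by
    ext ℓ; simp
  have h1 : (Measure.pi fun _ : X × A => gaussianReal 0 1) {ℓ : (X × A) → ℝ | |F ℓ| ≤ t}
      = ((Measure.pi fun _ : {i // p i} => gaussianReal 0 1).prod
          (Measure.pi fun _ : {i // ¬ p i} => gaussianReal 0 1))
          (e.symm ⁻¹' {ℓ : (X × A) → ℝ | |F ℓ| ≤ t}) := by
    rw [← hmp.measure_preimage hT.nullMeasurableSet, hpre]
  rw [show {ℓ : (X × A) → ℝ | |(∑ x : X, ℓ (x, a x)) - (∑ x : X, ℓ (x, b x)) + c| ≤ t}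
      = {ℓ : (X × A) → ℝ | |F ℓ| ≤ t} from rfl, h1, Measure.prod_apply hT]
  have hcoord : ∀ (y : {i // p i} → ℝ) (z : {i // ¬ p i} → ℝ) (i : X × A),
      e.symm (y, z) i = if h : p i then y ⟨i, h⟩ else z default := by
    intro y z i
    have hrfl : e.symm (y, z) i = if h : p i then y ⟨i, h⟩ else z ⟨i, h⟩ := rfl
    rw [hrfl]
    split
    · rfl
    · exact congrArg z (Unique.eq_default _)
  have hslice : ∀ y : {i // p i} → ℝ,
      (Measure.pi fun _ : {i // ¬ p i} => gaussianReal 0 1)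
        (Prod.mk y ⁻¹' (⇑e.symm ⁻¹' {ℓ : (X × A) → ℝ | |F ℓ| ≤ t}))
      ≤ ENNReal.ofReal (2 * t) := by
    intro y
    set G : ℝ := F (e.symm (y, fun _ => 0)) with hG
    have hz : ∀ z : {i // ¬ p i} → ℝ, F (e.symm (y, z)) = z default + G := by
      intro z
      have hb' : ∀ x ∈ (Finset.univ : Finset X),
          e.symm (y, z) (x, b x) = e.symm (y, fun _ => (0:ℝ)) (x, b x) := by
        intro x _
        rw [hcoord, hcoord, dif_pos (hne_b x), dif_pos (hne_b x)]
      have ha' : ∀ x ∈ Finset.univ.erase x₀,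
          e.symm (y, z) (x, a x) = e.symm (y, fun _ => (0:ℝ)) (x, a x) := by
        intro x hxmem
        rw [hcoord, hcoord, dif_pos (hne_a x (Finset.ne_of_mem_erase hxmem)),
          dif_pos (hne_a x (Finset.ne_of_mem_erase hxmem))]
      have h3 : e.symm (y, z) (x₀, a x₀) = z default := by
        rw [hcoord]; exact dif_neg (by simp [hp, hi₀])
      have h4 : e.symm (y, fun _ => (0:ℝ)) (x₀, a x₀) = 0 := by
        rw [hcoord]; exact dif_neg (by simp [hp, hi₀])
      have e1 : e.symm (y, z) (x₀, a x₀)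
            + ∑ x ∈ Finset.univ.erase x₀, e.symm (y, z) (x, a x)
          = ∑ x : X, e.symm (y, z) (x, a x) :=
        Finset.add_sum_erase Finset.univ
          (fun x => e.symm (y, z) (x, a x)) (Finset.mem_univ x₀)
      have e2 : e.symm (y, fun _ => (0:ℝ)) (x₀, a x₀)
            + ∑ x ∈ Finset.univ.erase x₀, e.symm (y, fun _ => (0:ℝ)) (x, a x)
          = ∑ x : X, e.symm (y, fun _ => (0:ℝ)) (x, a x) :=
        Finset.add_sum_erase Finset.univ
          (fun x => e.symm (y, fun _ => (0:ℝ)) (x, a x)) (Finset.mem_univ x₀)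
      simp only [hF, hG]
      rw [← e1, ← e2, h3, h4, Finset.sum_congr rfl ha', Finset.sum_congr rfl hb']
      ring
    have hsetz : Prod.mk y ⁻¹' (⇑e.symm ⁻¹' {ℓ : (X × A) → ℝ | |F ℓ| ≤ t})
        = Function.eval default ⁻¹' {s : ℝ | |s + G| ≤ t} := by
      ext z
      simp only [Set.mem_preimage, Set.mem_setOf_eq, hz z]
    rw [hsetz]
    refine le_of_eq_of_le ((aux_measurePreserving_eval
      (fun _ : {i // ¬ p i} => gaussianReal 0 1) default).measure_preimage
      ?_) (aux_gaussian_interval G t)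
    exact (measurableSet_le ((measurable_add_const G).abs)
      measurable_const).nullMeasurableSet
  refine le_trans (lintegral_mono hslice) ?_
  rw [lintegral_const, measure_univ, mul_one]

lemma aux_integrable_eval {ι : Type*} [Fintype ι] (i : ι) :
    Integrable (fun ℓ : ι → ℝ => ℓ i) (Measure.pi fun _ => gaussianReal 0 1) :=
  ((aux_measurePreserving_eval _ i).integrable_comp
    aestronglyMeasurable_id).mpr aux_integrable_id_gaussian

end Aux

set_option maxHeartbeats 2000000 in
/-- `Φ_𝒩` is differentiable at every `Θ`, with gradient
`∇Φ_𝒩(Θ) = E_{ℓ∼γ}[H(Θ,ℓ)]`, the expectation of the one-hot vector at the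
(γ-a.s. unique) maximizer of `h ↦ Θ[h] + q(ℓ)[h]`, for any measurable
selection `sel` of maximizers. -/
theorem PhiN_hasFDerivAt_expected_onehot {X A B : Type*}
    [Fintype X] [Fintype A] [Fintype B]
    [Nonempty X] [Nonempty A] [Nonempty B] [DecidableEq B]
    (pol : B → X → A)
    (hsep : ∀ h h' : B, h ≠ h' → ∃ x : X, pol h x ≠ pol h' x)
    (Θ : B → ℝ)
    (sel : ((X × A) → ℝ) → B)
    (hmeas : ∀ h : B,
      Measurable fun ℓ : (X × A) → ℝ => (if sel ℓ = h then (1:ℝ) else 0))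
    (hsel : ∀ᵐ ℓ : (X × A) → ℝ ∂(gaussianPerturbation X A), ∀ h' : B,
      Θ h' + ∑ x : X, ℓ (x, pol h' x)
        ≤ Θ (sel ℓ) + ∑ x : X, ℓ (x, pol (sel ℓ) x)) :
    HasFDerivAt (PhiN pol)
      (∑ h : B,
        (∫ ℓ : (X × A) → ℝ, (if sel ℓ = h then (1:ℝ) else 0)
            ∂(gaussianPerturbation X A)) •
          (ContinuousLinearMap.proj h : ((B → ℝ) →L[ℝ] ℝ))) Θ := by
  classical
  set γ := gaussianPerturbation X A with hγ
  haveI : IsProbabilityMeasure γ := by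
    rw [hγ]; unfold gaussianPerturbation; infer_instance
  -- basic objects
  set f : (B → ℝ) → ((X × A) → ℝ) → B → ℝ :=
    fun Θ' ℓ h => Θ' h + ∑ x : X, ℓ (x, pol h x) with hf
  set S : (B → ℝ) → ((X × A) → ℝ) → ℝ := fun Θ' ℓ => ⨆ h : B, f Θ' ℓ h with hSdef
  have hPhi : ∀ Θ' : B → ℝ, PhiN pol Θ' = ∫ ℓ, S Θ' ℓ ∂γ := fun _ => rfl
  -- measurability
  have hfm : ∀ (Θ' : B → ℝ) (h : B), Measurable fun ℓ : (X × A) → ℝ => f Θ' ℓ h := by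
    intro Θ' h
    exact measurable_const.add
      (Finset.measurable_sum Finset.univ fun x _ => measurable_pi_apply (x, pol h x))
  have hSm : ∀ Θ' : B → ℝ, Measurable (S Θ') := fun Θ' =>
    Measurable.iSup fun h => hfm Θ' h
  -- integrability
  have hfint : ∀ (Θ' : B → ℝ) (h : B), Integrable (fun ℓ => f Θ' ℓ h) γ := by
    intro Θ' h
    exact (integrable_const _).add
      (integrable_finset_sum _ fun x _ => aux_integrable_eval (x, pol h x))
  have hSint : ∀ Θ' : B → ℝ, Integrable (S Θ') γ := by
    intro Θ'
    refine Integrable.mono' (integrable_finset_sum Finset.univ fun h _ => (hfint Θ' h).abs)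
      (hSm Θ').aestronglyMeasurable (Filter.Eventually.of_forall fun ℓ => ?_)
    rw [Real.norm_eq_abs, abs_le]
    constructor
    · obtain ⟨h₀⟩ := ‹Nonempty B›
      have h1 : |f Θ' ℓ h₀| ≤ ∑ h : B, |f Θ' ℓ h| :=
        Finset.single_le_sum (f := fun h => |f Θ' ℓ h|)
          (fun h _ => abs_nonneg _) (Finset.mem_univ h₀)
      have h2 : f Θ' ℓ h₀ ≤ S Θ' ℓ := le_ciSup (Finite.bddAbove_range _) h₀
      have h3 : -|f Θ' ℓ h₀| ≤ f Θ' ℓ h₀ := neg_abs_le _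
      linarith
    · refine ciSup_le fun h => ?_
      have h1 : |f Θ' ℓ h| ≤ ∑ h' : B, |f Θ' ℓ h'| :=
        Finset.single_le_sum (f := fun h' => |f Θ' ℓ h'|)
          (fun h' _ => abs_nonneg _) (Finset.mem_univ h)
      have h2 : f Θ' ℓ h ≤ |f Θ' ℓ h| := le_abs_self _
      linarith
  -- the linear functional
  set vsel : (B → ℝ) → ((X × A) → ℝ) → ℝ :=
    fun v ℓ => ∑ h : B, (if sel ℓ = h then (1:ℝ) else 0) * v h with hvsel
  have hvsel_eq : ∀ (v : B → ℝ) (ℓ : (X × A) → ℝ), vsel v ℓ = v (sel ℓ) := by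
    intro v ℓ
    rw [hvsel]
    simp [ite_mul, Finset.sum_ite_eq]
  have hindint : ∀ h : B,
      Integrable (fun ℓ : (X × A) → ℝ => (if sel ℓ = h then (1:ℝ) else 0)) γ := by
    intro h
    refine Integrable.mono' (integrable_const 1) (hmeas h).aestronglyMeasurable
      (Filter.Eventually.of_forall fun ℓ => ?_)
    rw [Real.norm_eq_abs]
    split <;> simp
  have hvselint : ∀ v : B → ℝ, Integrable (vsel v) γ := fun v =>
    integrable_finset_sum _ fun h _ => (hindint h).mul_const _
  have hDval : ∀ v : B → ℝ,
      (∑ h : B, (∫ ℓ, (if sel ℓ = h then (1:ℝ) else 0) ∂γ) •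
        (ContinuousLinearMap.proj h : ((B → ℝ) →L[ℝ] ℝ))) v
      = ∫ ℓ, vsel v ℓ ∂γ := by
    intro v
    rw [hvsel]
    rw [integral_finset_sum _ fun h _ => (hindint h).mul_const _]
    rw [ContinuousLinearMap.sum_apply]
    refine Finset.sum_congr rfl fun h _ => ?_
    rw [ContinuousLinearMap.smul_apply, ContinuousLinearMap.proj_apply,
      integral_mul_const]
    rfl
  -- the bad event
  set E : (B → ℝ) → Set ((X × A) → ℝ) := fun v =>
    ⋃ pr : B × B, {ℓ | pr.1 ≠ pr.2 ∧ |f Θ ℓ pr.1 - f Θ ℓ pr.2| ≤ 2 * ‖v‖} with hE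
  have hEmeas : ∀ v : B → ℝ, MeasurableSet (E v) := by
    intro v
    refine MeasurableSet.iUnion fun pr => ?_
    by_cases hpr : pr.1 = pr.2
    · have : {ℓ : (X × A) → ℝ | pr.1 ≠ pr.2 ∧ |f Θ ℓ pr.1 - f Θ ℓ pr.2| ≤ 2 * ‖v‖} = ∅ := by
        ext ℓ; simp [hpr]
      rw [this]; exact MeasurableSet.empty
    · have : {ℓ : (X × A) → ℝ | pr.1 ≠ pr.2 ∧ |f Θ ℓ pr.1 - f Θ ℓ pr.2| ≤ 2 * ‖v‖}
          = {ℓ : (X × A) → ℝ | |f Θ ℓ pr.1 - f Θ ℓ pr.2| ≤ 2 * ‖v‖} := by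
        ext ℓ; simp [hpr]
      rw [this]
      exact measurableSet_le ((hfm Θ pr.1).sub (hfm Θ pr.2)).abs measurable_const
  set K : ℝ := ((Fintype.card B * Fintype.card B : ℕ) : ℝ) with hK
  have hKnn : 0 ≤ K := by positivity
  have hEbound : ∀ v : B → ℝ, (γ (E v)).toReal ≤ K * (2 * (2 * ‖v‖)) := by
    intro v
    have hsum : γ (E v) ≤ ∑ pr : B × B, γ {ℓ | pr.1 ≠ pr.2 ∧ |f Θ ℓ pr.1 - f Θ ℓ pr.2| ≤ 2 * ‖v‖} :=
      measure_iUnion_fintype_le _ _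
    have hpair : ∀ pr : B × B,
        γ {ℓ | pr.1 ≠ pr.2 ∧ |f Θ ℓ pr.1 - f Θ ℓ pr.2| ≤ 2 * ‖v‖}
          ≤ ENNReal.ofReal (2 * (2 * ‖v‖)) := by
      intro pr
      by_cases hpr : pr.1 = pr.2
      · have : {ℓ : (X × A) → ℝ | pr.1 ≠ pr.2 ∧ |f Θ ℓ pr.1 - f Θ ℓ pr.2| ≤ 2 * ‖v‖} = ∅ := by
          ext ℓ; simp [hpr]
        rw [this]; simp
      · obtain ⟨x₀, hx₀⟩ := hsep pr.1 pr.2 hpr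
        have heq : ∀ ℓ : (X × A) → ℝ, f Θ ℓ pr.1 - f Θ ℓ pr.2
            = (∑ x : X, ℓ (x, pol pr.1 x)) - (∑ x : X, ℓ (x, pol pr.2 x))
              + (Θ pr.1 - Θ pr.2) := by
          intro ℓ; rw [hf]; ring
        have hsub : {ℓ : (X × A) → ℝ | pr.1 ≠ pr.2 ∧ |f Θ ℓ pr.1 - f Θ ℓ pr.2| ≤ 2 * ‖v‖}
            ⊆ {ℓ : (X × A) → ℝ |
                |(∑ x : X, ℓ (x, pol pr.1 x)) - (∑ x : X, ℓ (x, pol pr.2 x))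
                  + (Θ pr.1 - Θ pr.2)| ≤ 2 * ‖v‖} := by
          intro ℓ hℓ
          rw [Set.mem_setOf_eq, ← heq ℓ]
          exact hℓ.2
        refine le_trans (measure_mono hsub) ?_
        rw [hγ]
        exact aux_pair_bound x₀ hx₀ (Θ pr.1 - Θ pr.2) (2 * ‖v‖)
    have h2 : γ (E v) ≤ ENNReal.ofReal (K * (2 * (2 * ‖v‖))) := by
      refine le_trans hsum (le_trans (Finset.sum_le_sum fun pr _ => hpair pr) ?_)
      have hcast : ((Fintype.card B * Fintype.card B : ℕ) : ENNReal)
          * ENNReal.ofReal (2 * (2 * ‖v‖))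
          = ENNReal.ofReal (K * (2 * (2 * ‖v‖))) := by
        rw [hK, ENNReal.ofReal_mul (Nat.cast_nonneg _), ENNReal.ofReal_natCast]
      rw [Finset.sum_const, Finset.card_univ, nsmul_eq_mul, Fintype.card_prod, hcast]
    exact ENNReal.toReal_le_of_le_ofReal (by positivity) h2
  -- pointwise bounds
  have hpt : ∀ v : B → ℝ, ∀ ℓ : (X × A) → ℝ,
      (∀ h' : B, f Θ ℓ h' ≤ f Θ ℓ (sel ℓ)) →
      0 ≤ S (Θ + v) ℓ - S Θ ℓ - v (sel ℓ) ∧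
      S (Θ + v) ℓ - S Θ ℓ - v (sel ℓ) ≤ (E v).indicator (fun _ => 2 * ‖v‖) ℓ := by
    intro v ℓ hmax
    have hSθ : S Θ ℓ = f Θ ℓ (sel ℓ) :=
      le_antisymm (ciSup_le hmax) (le_ciSup (Finite.bddAbove_range _) _)
    have hfv : ∀ h : B, f (Θ + v) ℓ h = f Θ ℓ h + v h := by
      intro h; rw [hf]; simp only [Pi.add_apply]; ring
    have hvb : ∀ h : B, |v h| ≤ ‖v‖ := by
      intro h
      have := norm_le_pi_norm v h
      rwa [Real.norm_eq_abs] at this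
    have hind0 : 0 ≤ (E v).indicator (fun _ => 2 * ‖v‖) ℓ :=
      Set.indicator_nonneg (fun _ _ => by positivity) ℓ
    constructor
    · have h1 : f (Θ + v) ℓ (sel ℓ) ≤ S (Θ + v) ℓ :=
        le_ciSup (Finite.bddAbove_range _) _
      rw [hfv (sel ℓ)] at h1
      rw [hSθ]
      linarith
    · have hmain : S (Θ + v) ℓ ≤ S Θ ℓ + v (sel ℓ)
          + (E v).indicator (fun _ => 2 * ‖v‖) ℓ := by
        refine ciSup_le fun h => ?_
        rw [hfv h]
        have hfh : f Θ ℓ h ≤ S Θ ℓ := le_ciSup (Finite.bddAbove_range _) _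
        by_cases hh : h = sel ℓ
        · subst hh; linarith
        · by_cases hgap : f Θ ℓ (sel ℓ) - f Θ ℓ h ≤ 2 * ‖v‖
          · have hmem : ℓ ∈ E v := by
              rw [hE]
              refine Set.mem_iUnion.mpr ⟨(sel ℓ, h), ⟨fun hc => hh hc.symm, ?_⟩⟩
              rw [abs_of_nonneg (by linarith [hmax h])]
              exact hgap
            rw [Set.indicator_of_mem hmem]
            have hb1 := abs_le.mp (hvb h)
            have hb2 := abs_le.mp (hvb (sel ℓ))
            linarith [hb1.2, hb2.1]
          · push_neg at hgap
            have hb1 := abs_le.mp (hvb h)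
            have hb2 := abs_le.mp (hvb (sel ℓ))
            have hfs : f Θ ℓ (sel ℓ) ≤ S Θ ℓ := le_ciSup (Finite.bddAbove_range _) _
            linarith [hb1.2, hb2.1]
      linarith
  -- conclude
  rw [hasFDerivAt_iff_isLittleO_nhds_zero, Asymptotics.isLittleO_iff]
  intro c hc
  have hδ : 0 < c / (8 * K + 1) := by positivity
  filter_upwards [Metric.ball_mem_nhds (0 : B → ℝ) hδ] with v hv
  rw [Metric.mem_ball, dist_zero_right] at hv
  set D := ∑ h : B,
      (∫ ℓ, (if sel ℓ = h then (1:ℝ) else 0) ∂γ) •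
        (ContinuousLinearMap.proj h : ((B → ℝ) →L[ℝ] ℝ)) with hD
  set I : ℝ := ∫ ℓ, (S (Θ + v) ℓ - S Θ ℓ - vsel v ℓ) ∂γ with hI
  have iSS : Integrable (fun ℓ => S (Θ + v) ℓ - S Θ ℓ) γ := (hSint (Θ + v)).sub (hSint Θ)
  have iSSv : Integrable (fun ℓ => S (Θ + v) ℓ - S Θ ℓ - vsel v ℓ) γ :=
    iSS.sub (hvselint v)
  have hdiff : PhiN pol (Θ + v) - PhiN pol Θ - D v = I := by
    rw [hPhi, hPhi, hD, hDval v, hI,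
      integral_sub iSS (hvselint v), integral_sub (hSint (Θ + v)) (hSint Θ)]
  have h0 : 0 ≤ I := by
    rw [hI]
    refine integral_nonneg_of_ae ?_
    filter_upwards [hsel] with ℓ hℓ
    have := (hpt v ℓ hℓ).1
    simp only [Pi.zero_apply]
    rw [hvsel_eq v ℓ]
    linarith
  have h1 : I ≤ (γ (E v)).toReal * (2 * ‖v‖) := by
    rw [← smul_eq_mul, hI, ← measureReal_def, ← integral_indicator_const (2 * ‖v‖) (hEmeas v)]
    refine integral_mono_ae iSSv
      ((integrable_const (2 * ‖v‖)).indicator (hEmeas v)) ?_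
    filter_upwards [hsel] with ℓ hℓ
    have := (hpt v ℓ hℓ).2
    rw [hvsel_eq v ℓ]
    exact this
  have h2 : I ≤ 8 * K * (‖v‖ * ‖v‖) := by
    have h3 := hEbound v
    have h4 : (0:ℝ) ≤ 2 * ‖v‖ := by positivity
    nlinarith [h1]
  have hv' : ‖v‖ * (8 * K + 1) < c := by
    rw [← lt_div_iff₀ (by positivity : (0:ℝ) < 8 * K + 1)]
    exact hv
  rw [hdiff, Real.norm_eq_abs, abs_of_nonneg h0]
  have h5 : ‖v‖ * (8 * K + 1) * ‖v‖ ≤ c * ‖v‖ :=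
    mul_le_mul_of_nonneg_right (le_of_lt hv') (norm_nonneg v)
  calc I ≤ 8 * K * (‖v‖ * ‖v‖) := h2
    _ ≤ ‖v‖ * (8 * K + 1) * ‖v‖ := by nlinarith [norm_nonneg v, sq_nonneg ‖v‖]
    _ ≤ c * ‖v‖ := h5
end

section
/- Φ_𝒩 is β-strongly smooth with respect to the ℓ∞ norm with β = √(8/π)·A·X; concretely, for all Θ, Θ′ ∈ ℝ^ℬ, ‖E_{ℓ∼γ}[H(Θ, ℓ)] − E_{ℓ∼γ}[H(Θ′, ℓ)]‖₁ ≤ √(8/π)·A·X·‖Θ − Θ′‖_∞. -/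
open MeasureTheory ProbabilityTheory Finset
open scoped NNReal ENNReal

lemma gauss_Icc_le (a b : ℝ) :
    gaussianReal 0 1 (Set.Icc a b) ≤ ENNReal.ofReal ((b - a) / Real.sqrt (2 * Real.pi)) := by
  rw [gaussianReal_apply 0 one_ne_zero]
  have hbd : ∀ x : ℝ, gaussianPDF 0 1 x ≤ ENNReal.ofReal (Real.sqrt (2 * Real.pi))⁻¹ := by
    intro x
    unfold gaussianPDF gaussianPDFReal
    apply ENNReal.ofReal_le_ofReal
    simp only [NNReal.coe_one, mul_one, sub_zero]
    have h1 : Real.exp (-x ^ 2 / 2) ≤ 1 := by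
      rw [Real.exp_le_one_iff]
      nlinarith [sq_nonneg x]
    have h3 : (0:ℝ) ≤ (Real.sqrt (2 * Real.pi))⁻¹ := by positivity
    nlinarith [Real.exp_pos (-x ^ 2 / 2)]
  calc ∫⁻ x in Set.Icc a b, gaussianPDF 0 1 x
      ≤ ∫⁻ _x in Set.Icc a b, ENNReal.ofReal (Real.sqrt (2 * Real.pi))⁻¹ :=
        lintegral_mono fun x => hbd x
    _ = ENNReal.ofReal (Real.sqrt (2 * Real.pi))⁻¹ * volume (Set.Icc a b) := by
        rw [setLIntegral_const]
    _ = ENNReal.ofReal (Real.sqrt (2 * Real.pi))⁻¹ * ENNReal.ofReal (b - a) := by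
        rw [Real.volume_Icc]
    _ ≤ ENNReal.ofReal ((b - a) / Real.sqrt (2 * Real.pi)) := by
        rw [← ENNReal.ofReal_mul (by positivity)]
        apply ENNReal.ofReal_le_ofReal
        rw [div_eq_mul_inv, mul_comm]

lemma lmarginal_const' {δ : Type*} [DecidableEq δ] {π : δ → Type*} [∀ i, MeasurableSpace (π i)]
    (μ : ∀ i, Measure (π i)) [∀ i, IsProbabilityMeasure (μ i)] (s : Finset δ) (c : ℝ≥0∞)
    (x : ∀ i, π i) : lmarginal μ s (fun _ => c) x = c := by
  rw [lmarginal, lintegral_const]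
  simp

lemma pi_strip_le {ι : Type*} [Fintype ι] [DecidableEq ι] (i₀ : ι)
    (c₁ c₂ : (ι → ℝ) → ℝ) (hm₁ : Measurable c₁) (hm₂ : Measurable c₂)
    (hu₁ : ∀ ℓ t, c₁ (Function.update ℓ i₀ t) = c₁ ℓ)
    (hu₂ : ∀ ℓ t, c₂ (Function.update ℓ i₀ t) = c₂ ℓ)
    {L : ℝ} (hlen : ∀ ℓ, c₂ ℓ - c₁ ℓ ≤ L) :
    Measure.pi (fun _ : ι => gaussianReal 0 1) {ℓ | c₁ ℓ ≤ ℓ i₀ ∧ ℓ i₀ ≤ c₂ ℓ}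
      ≤ ENNReal.ofReal (L / Real.sqrt (2 * Real.pi)) := by
  set μ : ι → Measure ℝ := fun _ => gaussianReal 0 1 with hμ
  have hSmeas : MeasurableSet {ℓ : ι → ℝ | c₁ ℓ ≤ ℓ i₀ ∧ ℓ i₀ ≤ c₂ ℓ} :=
    (measurableSet_le hm₁ (measurable_pi_apply i₀)).inter
      (measurableSet_le (measurable_pi_apply i₀) hm₂)
  set f : (ι → ℝ) → ℝ≥0∞ := Set.indicator {ℓ | c₁ ℓ ≤ ℓ i₀ ∧ ℓ i₀ ≤ c₂ ℓ} 1 with hfdef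
  have hf : Measurable f := measurable_one.indicator hSmeas
  have key : Measure.pi μ {ℓ : ι → ℝ | c₁ ℓ ≤ ℓ i₀ ∧ ℓ i₀ ≤ c₂ ℓ} = ∫⁻ ℓ, f ℓ ∂(Measure.pi μ) :=
    (lintegral_indicator_one hSmeas).symm
  rw [key, lintegral_eq_lmarginal_univ (fun _ => (0:ℝ)),
    lmarginal_erase' (μ := μ) f hf (Finset.mem_univ i₀)]
  have hinner : ∀ x : ι → ℝ, (∫⁻ t, f (Function.update x i₀ t) ∂(μ i₀))
      ≤ ENNReal.ofReal (L / Real.sqrt (2 * Real.pi)) := by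
    intro x
    have heq : (fun t => f (Function.update x i₀ t))
        = Set.indicator (Set.Icc (c₁ x) (c₂ x)) 1 := by
      funext t
      simp only [hfdef, Set.indicator_apply, Set.mem_setOf_eq, Set.mem_Icc, hu₁, hu₂,
        Function.update_self, Pi.one_apply]
    rw [heq]
    calc ∫⁻ t, Set.indicator (Set.Icc (c₁ x) (c₂ x)) 1 t ∂(μ i₀)
        = μ i₀ (Set.Icc (c₁ x) (c₂ x)) := lintegral_indicator_one measurableSet_Icc
      _ ≤ ENNReal.ofReal ((c₂ x - c₁ x) / Real.sqrt (2 * Real.pi)) := gauss_Icc_le _ _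
      _ ≤ ENNReal.ofReal (L / Real.sqrt (2 * Real.pi)) := by
          exact ENNReal.ofReal_le_ofReal
            ((div_le_div_iff_of_pos_right (Real.sqrt_pos.2 (by positivity))).2 (hlen x))
  calc lmarginal μ (Finset.univ.erase i₀)
        (fun x => ∫⁻ t, f (Function.update x i₀ t) ∂(μ i₀)) (fun _ => (0:ℝ))
      ≤ lmarginal μ (Finset.univ.erase i₀)
        (fun _ => ENNReal.ofReal (L / Real.sqrt (2 * Real.pi))) (fun _ => (0:ℝ)) :=
        lmarginal_mono (fun x => hinner x) _
    _ = ENNReal.ofReal (L / Real.sqrt (2 * Real.pi)) := lmarginal_const' μ _ _ _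

lemma measurable_sup'_fun {α ι : Type*} [MeasurableSpace α] {s : Finset ι} (hs : s.Nonempty)
    {f : ι → α → ℝ} (hf : ∀ i ∈ s, Measurable (f i)) :
    Measurable fun x => s.sup' hs fun i => f i x := by
  have h := Finset.measurable_sup' hs hf
  have heq : (fun x => s.sup' hs fun i => f i x) = s.sup' hs f := by
    funext x; rw [Finset.sup'_apply]
  rwa [heq]

lemma sup'_lipschitz {α : Type*} {s : Finset α} (hs : s.Nonempty) (F G : α → ℝ) {ε : ℝ}
    (h : ∀ a ∈ s, F a ≤ G a + ε) : s.sup' hs F ≤ s.sup' hs G + ε :=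
  Finset.sup'_le hs F fun a ha => (h a ha).trans (add_le_add_left (Finset.le_sup' G ha) ε)

/-- `Φ_𝒩` is `√(8/π)·A·X`-strongly smooth w.r.t. `‖·‖_∞`:
for all `Θ, Θ′` (with measurable selections `sel, sel'` of the a.s. unique
maximizers of `h ↦ Θ[h]+q(ℓ)[h]` and `h ↦ Θ′[h]+q(ℓ)[h]`),
`‖E[H(Θ,ℓ)] − E[H(Θ′,ℓ)]‖₁ ≤ √(8/π)·A·X·‖Θ − Θ′‖_∞`. -/
theorem PhiN_gradient_strongly_smooth {X A B : Type*}
    [Fintype X] [Fintype A] [Fintype B]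
    [Nonempty X] [Nonempty A] [Nonempty B] [DecidableEq B]
    (pol : B → X → A)
    (hsep : ∀ h h' : B, h ≠ h' → ∃ x : X, pol h x ≠ pol h' x)
    (Θ Θ' : B → ℝ)
    (sel sel' : ((X × A) → ℝ) → B)
    (hmeas : ∀ h : B,
      Measurable fun ℓ : (X × A) → ℝ => (if sel ℓ = h then (1:ℝ) else 0))
    (hmeas' : ∀ h : B,
      Measurable fun ℓ : (X × A) → ℝ => (if sel' ℓ = h then (1:ℝ) else 0))
    (hsel : ∀ᵐ ℓ : (X × A) → ℝ ∂(gaussianPerturbation X A), ∀ h' : B,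
      Θ h' + ∑ x : X, ℓ (x, pol h' x)
        ≤ Θ (sel ℓ) + ∑ x : X, ℓ (x, pol (sel ℓ) x))
    (hsel' : ∀ᵐ ℓ : (X × A) → ℝ ∂(gaussianPerturbation X A), ∀ h' : B,
      Θ' h' + ∑ x : X, ℓ (x, pol h' x)
        ≤ Θ' (sel' ℓ) + ∑ x : X, ℓ (x, pol (sel' ℓ) x)) :
    ∑ h : B,
      |(∫ ℓ : (X × A) → ℝ, (if sel ℓ = h then (1:ℝ) else 0)
          ∂(gaussianPerturbation X A))
        - (∫ ℓ : (X × A) → ℝ, (if sel' ℓ = h then (1:ℝ) else 0)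
            ∂(gaussianPerturbation X A))|
      ≤ Real.sqrt (8 / Real.pi) * (Fintype.card A) * (Fintype.card X) *
          (⨆ h : B, |Θ h - Θ' h|) := by
  classical
  set μ : Measure ((X × A) → ℝ) := gaussianPerturbation X A with hμdef
  haveI : IsProbabilityMeasure μ := by
    rw [hμdef]; unfold gaussianPerturbation; infer_instance
  set ε : ℝ := ⨆ h : B, |Θ h - Θ' h| with hεdef
  have hbdd : BddAbove (Set.range fun h : B => |Θ h - Θ' h|) := (Set.finite_range _).bddAbove
  have hεle : ∀ h : B, |Θ h - Θ' h| ≤ ε := fun h => le_ciSup hbdd h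
  have hε0 : (0:ℝ) ≤ ε := le_trans (abs_nonneg _) (hεle (Classical.arbitrary B))
  -- notation
  set q : B → ((X × A) → ℝ) → ℝ := fun h ℓ => ∑ x : X, ℓ (x, pol h x) with hqdef
  have hqmeas : ∀ h : B, Measurable (q h) := fun h =>
    Finset.measurable_sum _ fun x _ => measurable_pi_apply _
  set r : X → (B → ℝ) → B → ((X × A) → ℝ) → ℝ :=
    fun x θ h ℓ => θ h + ∑ x' ∈ Finset.univ.erase x, ℓ (x', pol h x') with hrdef
  have hrmeas : ∀ x θ h, Measurable (r x θ h) := fun x θ h =>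
    measurable_const.add (Finset.measurable_sum _ fun x' _ => measurable_pi_apply _)
  set S : X × A → Finset B := fun p => Finset.univ.filter (fun h => pol h p.1 = p.2) with hSdef
  set T : X × A → Finset B := fun p => Finset.univ.filter (fun h => pol h p.1 ≠ p.2) with hTdef
  -- the bad strip events
  set Bad : X × A → Set ((X × A) → ℝ) := fun p =>
    if hx : (S p).Nonempty ∧ (T p).Nonempty then
      {ℓ | (T p).sup' hx.2 (fun h => Θ h + q h ℓ)
             - (S p).sup' hx.1 (fun h => r p.1 Θ h ℓ) ≤ ℓ p ∧
           ℓ p ≤ (T p).sup' hx.2 (fun h => Θ' h + q h ℓ)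
             - (S p).sup' hx.1 (fun h => r p.1 Θ' h ℓ)} 
    else ∅ with hBaddef
  have hBadMeas : ∀ p, MeasurableSet (Bad p) := by
    intro p
    simp only [hBaddef]
    by_cases hx : (S p).Nonempty ∧ (T p).Nonempty
    · rw [dif_pos hx]
      have h1 : Measurable fun ℓ => (T p).sup' hx.2 (fun h => Θ h + q h ℓ)
          - (S p).sup' hx.1 (fun h => r p.1 Θ h ℓ) := by
        apply Measurable.sub
        · exact measurable_sup'_fun hx.2 (fun h _ => measurable_const.add (hqmeas h))
        · exact measurable_sup'_fun hx.1 (fun h _ => hrmeas p.1 Θ h)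
      have h2 : Measurable fun ℓ => (T p).sup' hx.2 (fun h => Θ' h + q h ℓ)
          - (S p).sup' hx.1 (fun h => r p.1 Θ' h ℓ) := by
        apply Measurable.sub
        · exact measurable_sup'_fun hx.2 (fun h _ => measurable_const.add (hqmeas h))
        · exact measurable_sup'_fun hx.1 (fun h _ => hrmeas p.1 Θ' h)
      exact (measurableSet_le h1 (measurable_pi_apply p)).inter
        (measurableSet_le (measurable_pi_apply p) h2)
    · rw [dif_neg hx]; exact MeasurableSet.empty
  -- measure bound for each bad event
  have hBadLe : ∀ p, μ (Bad p) ≤ ENNReal.ofReal (2 * ε / Real.sqrt (2 * Real.pi)) := by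
    intro p
    simp only [hBaddef]
    by_cases hx : (S p).Nonempty ∧ (T p).Nonempty
    · rw [dif_pos hx]
      have hμpi : μ = Measure.pi (fun _ : X × A => gaussianReal 0 1) := by
        rw [hμdef]; rfl
      rw [hμpi]
      apply pi_strip_le p
      · apply Measurable.sub
        · exact measurable_sup'_fun hx.2 (fun h _ => measurable_const.add (hqmeas h))
        · exact measurable_sup'_fun hx.1 (fun h _ => hrmeas p.1 Θ h)
      · apply Measurable.sub
        · exact measurable_sup'_fun hx.2 (fun h _ => measurable_const.add (hqmeas h))
        · exact measurable_sup'_fun hx.1 (fun h _ => hrmeas p.1 Θ' h)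
      · -- update invariance
        intro ℓ t
        have hT : ∀ h ∈ T p, Θ h + q h (Function.update ℓ p t) = Θ h + q h ℓ := by
          intro h hh
          have hcond : pol h p.1 ≠ p.2 := by
            rw [hTdef] at hh; simpa using (Finset.mem_filter.1 hh).2
          congr 1
          simp only [hqdef]
          apply Finset.sum_congr rfl
          intro x' _
          apply Function.update_of_ne
          intro hcontra
          have hc1 : x' = p.1 := congrArg Prod.fst hcontra
          have hc2 : pol h x' = p.2 := congrArg Prod.snd hcontra
          exact hcond (hc1 ▸ hc2)
        have hS : ∀ h ∈ S p, r p.1 Θ h (Function.update ℓ p t) = r p.1 Θ h ℓ := by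
          intro h _
          simp only [hrdef]
          congr 1
          apply Finset.sum_congr rfl
          intro x' hx'
          apply Function.update_of_ne
          intro hcontra
          exact (Finset.mem_erase.1 hx').1 (congrArg Prod.fst hcontra)
        rw [Finset.sup'_congr hx.2 rfl hT, Finset.sup'_congr hx.1 rfl hS]
      · intro ℓ t
        have hT : ∀ h ∈ T p, Θ' h + q h (Function.update ℓ p t) = Θ' h + q h ℓ := by
          intro h hh
          have hcond : pol h p.1 ≠ p.2 := by
            rw [hTdef] at hh; simpa using (Finset.mem_filter.1 hh).2
          congr 1
          simp only [hqdef]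
          apply Finset.sum_congr rfl
          intro x' _
          apply Function.update_of_ne
          intro hcontra
          have h1 := congrArg Prod.fst hcontra
          have h2 := congrArg Prod.snd hcontra
          exact hcond (h1 ▸ h2)
        have hS : ∀ h ∈ S p, r p.1 Θ' h (Function.update ℓ p t) = r p.1 Θ' h ℓ := by
          intro h _
          simp only [hrdef]
          congr 1
          apply Finset.sum_congr rfl
          intro x' hx'
          apply Function.update_of_ne
          intro hcontra
          exact (Finset.mem_erase.1 hx').1 (congrArg Prod.fst hcontra)
        rw [Finset.sup'_congr hx.2 rfl hT, Finset.sup'_congr hx.1 rfl hS]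
      · -- strip width
        intro ℓ
        have hM : (T p).sup' hx.2 (fun h => Θ' h + q h ℓ)
            ≤ (T p).sup' hx.2 (fun h => Θ h + q h ℓ) + ε := by
          apply sup'_lipschitz
          intro h _
          have := hεle h
          have := abs_le.1 (hεle h)
          linarith [this.2]
        have hG : (S p).sup' hx.1 (fun h => r p.1 Θ h ℓ)
            ≤ (S p).sup' hx.1 (fun h => r p.1 Θ' h ℓ) + ε := by
          apply sup'_lipschitz
          intro h _
          have := abs_le.1 (hεle h)
          rw [hrdef]
          simp only
          linarith [this.1]
        linarith
    · rw [dif_neg hx]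
      simp only [measure_empty]
      positivity
  -- pointwise a.e. bound
  have hae : ∀ᵐ ℓ ∂μ,
      (∑ h : B, |(if sel ℓ = h then (1:ℝ) else 0) - (if sel' ℓ = h then (1:ℝ) else 0)|)
        ≤ ∑ p : X × A, 2 * (Bad p).indicator (fun _ => (1:ℝ)) ℓ := by
    filter_upwards [hsel, hsel'] with ℓ h1 h2
    have hRHSnonneg : ∀ p : X × A, (0:ℝ) ≤ 2 * (Bad p).indicator (fun _ => (1:ℝ)) ℓ := by
      intro p
      have : (0:ℝ) ≤ (Bad p).indicator (fun _ => (1:ℝ)) ℓ :=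
        Set.indicator_nonneg (fun _ _ => zero_le_one) ℓ
      linarith
    by_cases he : sel ℓ = sel' ℓ
    · have : (∑ h : B, |(if sel ℓ = h then (1:ℝ) else 0) - (if sel' ℓ = h then (1:ℝ) else 0)|)
          = 0 := by
        apply Finset.sum_eq_zero
        intro h _
        rw [he, sub_self, abs_zero]
      rw [this]
      exact Finset.sum_nonneg fun p _ => hRHSnonneg p
    · -- left side ≤ 2
      have hL : (∑ h : B, |(if sel ℓ = h then (1:ℝ) else 0) - (if sel' ℓ = h then (1:ℝ) else 0)|)
          ≤ 2 := by
        have hpt : ∀ h : B, |(if sel ℓ = h then (1:ℝ) else 0) - (if sel' ℓ = h then (1:ℝ) else 0)|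
            ≤ (if sel ℓ = h then (1:ℝ) else 0) + (if sel' ℓ = h then (1:ℝ) else 0) := by
          intro h
          have h1' : |(if sel ℓ = h then (1:ℝ) else 0)| = (if sel ℓ = h then (1:ℝ) else 0) := by
            split <;> simp
          have h2' : |(if sel' ℓ = h then (1:ℝ) else 0)| = (if sel' ℓ = h then (1:ℝ) else 0) := by
            split <;> simp
          calc |(if sel ℓ = h then (1:ℝ) else 0) - (if sel' ℓ = h then (1:ℝ) else 0)|
              ≤ |(if sel ℓ = h then (1:ℝ) else 0)| + |(if sel' ℓ = h then (1:ℝ) else 0)| :=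
                abs_sub _ _
            _ = _ := by rw [h1', h2']
        calc (∑ h : B, |(if sel ℓ = h then (1:ℝ) else 0) - (if sel' ℓ = h then (1:ℝ) else 0)|)
            ≤ ∑ h : B, ((if sel ℓ = h then (1:ℝ) else 0) + (if sel' ℓ = h then (1:ℝ) else 0)) :=
              Finset.sum_le_sum fun h _ => hpt h
          _ = 2 := by
              rw [Finset.sum_add_distrib]
              simp [Finset.sum_ite_eq]
              norm_num
      -- right side ≥ 2
      obtain ⟨x, hx⟩ := hsep (sel ℓ) (sel' ℓ) he
      set p : X × A := (x, pol (sel ℓ) x) with hpdef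
      have hSne : (S p).Nonempty := ⟨sel ℓ, by rw [hSdef]; simp [hpdef]⟩
      have hTne : (T p).Nonempty := ⟨sel' ℓ, by
        rw [hTdef]; simp only [Finset.mem_filter, Finset.mem_univ, true_and, hpdef]
        exact fun hc => hx hc.symm⟩
      have hmem : ℓ ∈ Bad p := by
        simp only [hBaddef, Set.mem_setOf_eq]
        rw [dif_pos ⟨hSne, hTne⟩]
        simp only [Set.mem_setOf_eq]
        have hsplit : ∀ h : B, q h ℓ = ℓ (x, pol h x) + ∑ x' ∈ Finset.univ.erase x,
            ℓ (x', pol h x') := by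
          intro h
          rw [hqdef]
          exact (Finset.add_sum_erase _ _ (Finset.mem_univ x)).symm
        constructor
        · rw [sub_le_iff_le_add]
          apply Finset.sup'_le
          intro h' hh'
          calc Θ h' + q h' ℓ ≤ Θ (sel ℓ) + q (sel ℓ) ℓ := h1 h'
            _ = ℓ p + r p.1 Θ (sel ℓ) ℓ := by
                rw [hrdef, hsplit (sel ℓ)]; simp only [hpdef]; ring
            _ ≤ ℓ p + (S p).sup' hSne (fun h => r p.1 Θ h ℓ) := by
                have : sel ℓ ∈ S p := by rw [hSdef]; simp [hpdef]
                linarith [Finset.le_sup' (fun h => r p.1 Θ h ℓ) this]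
        · have hub : ∀ h ∈ S p, r p.1 Θ' h ℓ
              ≤ ((T p).sup' hTne fun h => Θ' h + q h ℓ) - ℓ p := by
            intro h hh
            have hcond : pol h p.1 = p.2 := by
              rw [hSdef] at hh; simpa using (Finset.mem_filter.1 hh).2
            have hq : Θ' h + q h ℓ = ℓ p + r p.1 Θ' h ℓ := by
              rw [hrdef, hsplit h]
              simp only [hpdef]
              simp only [hpdef] at hcond
              rw [hcond]
              ring
            have hle : Θ' h + q h ℓ ≤ Θ' (sel' ℓ) + q (sel' ℓ) ℓ := h2 h
            have hmemT : sel' ℓ ∈ T p := by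
              rw [hTdef]
              simp only [Finset.mem_filter, Finset.mem_univ, true_and, hpdef]
              exact fun hc => hx hc.symm
            have := Finset.le_sup' (fun h => Θ' h + q h ℓ) hmemT
            linarith
          have := Finset.sup'_le hSne _ hub
          linarith [this]
      have h2' : (2:ℝ) ≤ ∑ p' : X × A, 2 * (Bad p').indicator (fun _ => (1:ℝ)) ℓ := by
        have hterm : 2 * (Bad p).indicator (fun _ => (1:ℝ)) ℓ = 2 := by
          rw [Set.indicator_of_mem hmem]; norm_num
        calc (2:ℝ) = 2 * (Bad p).indicator (fun _ => (1:ℝ)) ℓ := hterm.symm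
          _ ≤ _ := Finset.single_le_sum (fun p' _ => hRHSnonneg p') (Finset.mem_univ p)
      linarith
  -- integrability facts
  have hint1 : ∀ h : B, Integrable (fun ℓ => (if sel ℓ = h then (1:ℝ) else 0)) μ := by
    intro h
    refine ⟨(hmeas h).aestronglyMeasurable, ?_⟩
    apply HasFiniteIntegral.of_bounded (C := 1)
    filter_upwards with ℓ
    rw [Real.norm_eq_abs]
    split <;> simp
  have hint2 : ∀ h : B, Integrable (fun ℓ => (if sel' ℓ = h then (1:ℝ) else 0)) μ := by
    intro h
    refine ⟨(hmeas' h).aestronglyMeasurable, ?_⟩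
    apply HasFiniteIntegral.of_bounded (C := 1)
    filter_upwards with ℓ
    rw [Real.norm_eq_abs]
    split <;> simp
  have hintd : ∀ h : B, Integrable
      (fun ℓ => |(if sel ℓ = h then (1:ℝ) else 0) - (if sel' ℓ = h then (1:ℝ) else 0)|) μ :=
    fun h => ((hint1 h).sub (hint2 h)).abs
  have hintBad : ∀ p : X × A,
      Integrable (fun ℓ => 2 * (Bad p).indicator (fun _ => (1:ℝ)) ℓ) μ := by
    intro p
    exact ((integrable_const (1:ℝ)).indicator (hBadMeas p)).const_mul 2
  -- step 1
  have step1 : (∑ h : B,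
      |(∫ ℓ, (if sel ℓ = h then (1:ℝ) else 0) ∂μ) - ∫ ℓ, (if sel' ℓ = h then (1:ℝ) else 0) ∂μ|)
      ≤ ∫ ℓ, (∑ h : B,
        |(if sel ℓ = h then (1:ℝ) else 0) - (if sel' ℓ = h then (1:ℝ) else 0)|) ∂μ := by
    rw [integral_finset_sum _ (fun h _ => hintd h)]
    apply Finset.sum_le_sum
    intro h _
    rw [← integral_sub (hint1 h) (hint2 h)]
    calc |∫ ℓ, ((if sel ℓ = h then (1:ℝ) else 0) - (if sel' ℓ = h then (1:ℝ) else 0)) ∂μ|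
        = ‖∫ ℓ, ((if sel ℓ = h then (1:ℝ) else 0) - (if sel' ℓ = h then (1:ℝ) else 0)) ∂μ‖ :=
          (Real.norm_eq_abs _).symm
      _ ≤ ∫ ℓ, ‖(if sel ℓ = h then (1:ℝ) else 0) - (if sel' ℓ = h then (1:ℝ) else 0)‖ ∂μ :=
          norm_integral_le_integral_norm _
      _ = _ := by simp_rw [Real.norm_eq_abs]
  -- step 2
  have step2 : ∫ ℓ, (∑ h : B,
        |(if sel ℓ = h then (1:ℝ) else 0) - (if sel' ℓ = h then (1:ℝ) else 0)|) ∂μ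
      ≤ ∫ ℓ, (∑ p : X × A, 2 * (Bad p).indicator (fun _ => (1:ℝ)) ℓ) ∂μ := by
    apply integral_mono_ae (integrable_finset_sum _ (fun h _ => hintd h))
      (integrable_finset_sum _ (fun p _ => hintBad p)) hae
  -- step 3: compute/bound the right integral
  have step3 : ∫ ℓ, (∑ p : X × A, 2 * (Bad p).indicator (fun _ => (1:ℝ)) ℓ) ∂μ
      ≤ (Fintype.card X : ℝ) * (Fintype.card A) * (4 * ε / Real.sqrt (2 * Real.pi)) := by
    rw [integral_finset_sum _ (fun p _ => hintBad p)]
    have hone : ∀ p : X × A, (∫ ℓ, 2 * (Bad p).indicator (fun _ => (1:ℝ)) ℓ ∂μ)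
        = 2 * (μ (Bad p)).toReal := by
      intro p
      rw [integral_const_mul]
      congr 1
      have : (fun ℓ => (Bad p).indicator (fun _ => (1:ℝ)) ℓ) = (Bad p).indicator 1 := rfl
      rw [this, integral_indicator_one (hBadMeas p), measureReal_def]
    calc (∑ p : X × A, ∫ ℓ, 2 * (Bad p).indicator (fun _ => (1:ℝ)) ℓ ∂μ)
        = ∑ p : X × A, 2 * (μ (Bad p)).toReal := by
          exact Finset.sum_congr rfl fun p _ => hone p
      _ ≤ ∑ _p : X × A, 2 * (2 * ε / Real.sqrt (2 * Real.pi)) := by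
          apply Finset.sum_le_sum
          intro p _
          have := ENNReal.toReal_le_of_le_ofReal (by positivity) (hBadLe p)
          linarith
      _ = (Fintype.card X : ℝ) * (Fintype.card A) * (4 * ε / Real.sqrt (2 * Real.pi)) := by
          rw [Finset.sum_const, Finset.card_univ, Fintype.card_prod, nsmul_eq_mul]
          push_cast
          ring
  -- final arithmetic
  have hsqrt : (4:ℝ) / Real.sqrt (2 * Real.pi) = Real.sqrt (8 / Real.pi) := by
    have hpos : (0:ℝ) < Real.sqrt (2 * Real.pi) := Real.sqrt_pos.2 (by positivity)
    rw [div_eq_iff hpos.ne', ← Real.sqrt_mul (by positivity)]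
    rw [show 8 / Real.pi * (2 * Real.pi) = 16 by field_simp; ring]
    rw [show (16:ℝ) = 4 ^ 2 by norm_num, Real.sqrt_sq (by norm_num)]
  calc (∑ h : B,
      |(∫ ℓ, (if sel ℓ = h then (1:ℝ) else 0) ∂μ) - ∫ ℓ, (if sel' ℓ = h then (1:ℝ) else 0) ∂μ|)
      ≤ (Fintype.card X : ℝ) * (Fintype.card A) * (4 * ε / Real.sqrt (2 * Real.pi)) :=
        le_trans step1 (le_trans step2 step3)
    _ = Real.sqrt (8 / Real.pi) * (Fintype.card A) * (Fintype.card X) * ε := by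
        rw [← hsqrt]; ring
end

section
/- sup_{u∈Δ(ℬ)} R_𝒩(u) − inf_{u∈Δ(ℬ)} R_𝒩(u) ≤ √(2 X ln B). -/
open MeasureTheory ProbabilityTheory

/-- `R_𝒩(u) = sup_Θ (⟨Θ,u⟩ − Φ_𝒩(Θ))`, the Fenchel conjugate of `Φ_𝒩`
(real-valued; it is finite on `Δ(ℬ)`). -/
noncomputable def RN {X A B : Type*} [Fintype X] [Fintype A] [Fintype B]
    (pol : B → X → A) (u : B → ℝ) : ℝ :=
  ⨆ Θ : B → ℝ, ((∑ h : B, Θ h * u h) - PhiN pol Θ)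

namespace RNOsc

open Real

/-! ### One-dimensional Gaussian facts -/

noncomputable def gpdf : ℝ → NNReal := fun x => (gaussianPDFReal 0 1 x).toNNReal

lemma gaussianReal_repr : gaussianReal 0 1 = volume.withDensity (fun x => (gpdf x : ENNReal)) := by
  rw [gaussianReal_of_var_ne_zero 0 one_ne_zero]; rfl

lemma gpdf_meas : Measurable gpdf := (measurable_gaussianPDFReal 0 1).real_toNNReal

lemma gpdf_smul (t x : ℝ) : gpdf x • Real.exp (t * x)
    = (Real.sqrt (2 * π))⁻¹ * Real.exp (-(1/2) * x ^ 2 + t * x) := by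
  rw [NNReal.smul_def]
  show (((gaussianPDFReal 0 1 x).toNNReal : ℝ)) * _ = _
  rw [Real.coe_toNNReal _ (gaussianPDFReal_nonneg 0 1 x)]
  unfold gaussianPDFReal
  push_cast
  rw [mul_one, mul_one, sub_zero, mul_assoc, ← Real.exp_add]
  congr 2
  ring

lemma integrable_gauss_exp_aux (t : ℝ) :
    Integrable (fun x : ℝ => Real.exp (-(1/2) * x ^ 2 + t * x)) := by
  have h := (integrable_exp_neg_mul_sq (by norm_num : (0:ℝ) < 1/2)).comp_sub_right t
  have h2 := h.const_mul (Real.exp (t ^ 2 / 2))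
  refine h2.congr (Filter.Eventually.of_forall fun x => ?_)
  show Real.exp (t ^ 2 / 2) * Real.exp (-(1/2) * (x - t) ^ 2) = _
  rw [← Real.exp_add]
  congr 1
  ring

lemma integral_gauss_exp_aux (t : ℝ) :
    ∫ x : ℝ, Real.exp (-(1/2) * x ^ 2 + t * x) = Real.sqrt (2 * π) * Real.exp (t ^ 2 / 2) := by
  have h1 : ∀ x : ℝ, Real.exp (-(1/2) * x ^ 2 + t * x)
      = Real.exp (t ^ 2 / 2) * Real.exp (-(1/2) * (x - t) ^ 2) := by
    intro x; rw [← Real.exp_add]; congr 1; ring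
  simp_rw [h1]
  rw [MeasureTheory.integral_const_mul _ _]
  have h2 : ∫ x : ℝ, Real.exp (-(1/2) * (x - t) ^ 2) = ∫ x : ℝ, Real.exp (-(1/2) * x ^ 2) :=
    integral_sub_right_eq_self (fun x => Real.exp (-(1/2) * x ^ 2)) t
  rw [h2, integral_gaussian, show π / (1/2 : ℝ) = 2 * π by ring]
  ring

lemma integrable_exp_gauss (t : ℝ) :
    Integrable (fun x => Real.exp (t * x)) (gaussianReal 0 1) := by
  rw [gaussianReal_repr, integrable_withDensity_iff_integrable_smul gpdf_meas]
  have h := (integrable_gauss_exp_aux t).const_mul (Real.sqrt (2 * π))⁻¹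
  exact h.congr (Filter.Eventually.of_forall fun x => (gpdf_smul t x).symm)

lemma integral_exp_gauss (t : ℝ) :
    ∫ x, Real.exp (t * x) ∂(gaussianReal 0 1) = Real.exp (t ^ 2 / 2) := by
  rw [gaussianReal_repr, integral_withDensity_eq_integral_smul gpdf_meas]
  simp_rw [gpdf_smul t]
  rw [MeasureTheory.integral_const_mul _ _, integral_gauss_exp_aux, ← mul_assoc,
    inv_mul_cancel₀ (Real.sqrt_ne_zero'.mpr (by positivity)), one_mul]

lemma integrable_id_gauss : Integrable (fun x : ℝ => x) (gaussianReal 0 1) := by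
  have hsum : Integrable (fun x : ℝ => Real.exp x + Real.exp (-x)) (gaussianReal 0 1) := by
    refine ((integrable_exp_gauss 1).add (integrable_exp_gauss (-1))).congr
      (Filter.Eventually.of_forall fun x => by norm_num)
  refine Integrable.mono' hsum
    measurable_id.aestronglyMeasurable (Filter.Eventually.of_forall fun x => ?_)
  rw [Real.norm_eq_abs]
  rcases le_or_gt 0 x with hx | hx
  · have h1 := Real.add_one_le_exp x
    have h2 := Real.exp_pos (-x)
    rw [abs_of_nonneg hx]; linarith
  · have h1 := Real.add_one_le_exp (-x)
    have h2 := Real.exp_pos x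
    rw [abs_of_neg hx]; linarith

lemma integral_id_gauss : ∫ x, x ∂(gaussianReal 0 1) = 0 := by
  have hmap : (gaussianReal 0 1).map (fun x : ℝ => -1 * x) = gaussianReal 0 1 := by
    have h := gaussianReal_map_const_mul (μ := 0) (v := 1) (-1)
    have hv : (NNReal.mk ((-1 : ℝ) ^ 2) (sq_nonneg _) * 1 : NNReal) = 1 := by
      rw [mul_one]; exact NNReal.eq (show (-1 : ℝ) ^ 2 = 1 by norm_num)
    rw [mul_zero] at h
    exact h.trans (congrArg (gaussianReal 0) hv)
  have h := integral_map (μ := gaussianReal 0 1)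
    (φ := fun x : ℝ => -1 * x) (f := fun x : ℝ => x)
    ((measurable_id.const_mul _).aemeasurable)
    (by rw [hmap]; exact measurable_id.aestronglyMeasurable)
  rw [hmap] at h
  simp only [neg_one_mul] at h
  rw [integral_neg] at h
  linarith

/-! ### Product measure facts -/

variable {X A B : Type*} [Fintype X] [Fintype A] [Fintype B]
  [Nonempty X] [Nonempty A] [Nonempty B] (pol : B → X → A)

lemma pi_integral (f : (X × A) → ℝ → ℝ) :
    ∫ ℓ, (∏ i, f i (ℓ i)) ∂(gaussianPerturbation X A)
      = ∏ i, ∫ x, f i x ∂(gaussianReal 0 1) := by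
  letI : MeasureSpace ℝ := ⟨gaussianReal 0 1⟩
  haveI : SigmaFinite (volume : Measure ℝ) := inferInstanceAs (SigmaFinite (gaussianReal 0 1))
  exact MeasureTheory.integral_fintype_prod_eq_prod f (μ := fun _ => gaussianReal 0 1)

lemma pi_integrable (f : (X × A) → ℝ → ℝ)
    (hf : ∀ i, Integrable (f i) (gaussianReal 0 1)) :
    Integrable (fun ℓ : (X × A) → ℝ => ∏ i, f i (ℓ i)) (gaussianPerturbation X A) := by
  letI : MeasureSpace ℝ := ⟨gaussianReal 0 1⟩
  haveI : SigmaFinite (volume : Measure ℝ) := inferInstanceAs (SigmaFinite (gaussianReal 0 1))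
  exact MeasureTheory.Integrable.fintype_prod (𝕜 := ℝ) hf

instance : IsProbabilityMeasure (gaussianPerturbation X A) := by
  unfold gaussianPerturbation; infer_instance

lemma integrable_coord (i : X × A) :
    Integrable (fun ℓ : (X × A) → ℝ => ℓ i) (gaussianPerturbation X A) := by
  classical
  have h : Integrable (fun ℓ : (X × A) → ℝ => ∏ j, (if j = i then |ℓ j| else 1))
      (gaussianPerturbation X A) := by
    have := pi_integrable (fun j y => if j = i then |y| else 1) (fun j => ?_)
    · exact this
    · by_cases hj : j = i
      · simpa [hj] using integrable_id_gauss.abs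
      · simpa [hj] using (integrable_const (1 : ℝ))
  have heq : ∀ ℓ : (X × A) → ℝ, (∏ j, (if j = i then |ℓ j| else 1)) = |ℓ i| := by
    intro ℓ
    rw [Finset.prod_eq_single i (fun j _ hj => if_neg hj) (by simp)]
    simp
  simp_rw [heq] at h
  exact (integrable_norm_iff (measurable_pi_apply i).aestronglyMeasurable).mp
    (by simpa [Real.norm_eq_abs] using h)

lemma integral_coord (i : X × A) :
    ∫ ℓ, ℓ i ∂(gaussianPerturbation X A) = 0 := by
  classical
  have h := pi_integral (fun j y => if j = i then y else 1)
  have heq : ∀ ℓ : (X × A) → ℝ, (∏ j, (if j = i then ℓ j else 1)) = ℓ i := by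
    intro ℓ
    rw [Finset.prod_eq_single i (fun j _ hj => if_neg hj) (by simp)]
    simp
  simp_rw [heq] at h
  rw [h, Finset.prod_eq_zero (Finset.mem_univ i)]
  simp only [if_pos rfl]
  exact integral_id_gauss

lemma integrable_S (h : B) :
    Integrable (fun ℓ : (X × A) → ℝ => ∑ x : X, ℓ (x, pol h x)) (gaussianPerturbation X A) :=
  integrable_finset_sum _ fun x _ => integrable_coord (x, pol h x)

lemma integral_S (h : B) :
    ∫ ℓ, (∑ x : X, ℓ (x, pol h x)) ∂(gaussianPerturbation X A) = 0 := by
  rw [integral_finset_sum _ fun x _ => integrable_coord (x, pol h x)]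
  simp [integral_coord]

lemma integrable_exp_S (h : B) (t : ℝ) :
    Integrable (fun ℓ : (X × A) → ℝ => Real.exp (t * ∑ x : X, ℓ (x, pol h x)))
      (gaussianPerturbation X A) := by
  classical
  have key : ∀ ℓ : (X × A) → ℝ, Real.exp (t * ∑ x : X, ℓ (x, pol h x))
      = ∏ i : X × A, (if i.2 = pol h i.1 then Real.exp (t * ℓ i) else 1) := by
    intro ℓ
    rw [Fintype.prod_prod_type]
    have : ∀ x : X, (∏ a : A, (if a = pol h x then Real.exp (t * ℓ (x, a)) else 1))
        = Real.exp (t * ℓ (x, pol h x)) := fun x => by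
      rw [Finset.prod_eq_single (pol h x) (fun a _ ha => if_neg ha) (by simp)]
      simp
    simp_rw [this, ← Real.exp_sum, Finset.mul_sum]
  have h2 := pi_integrable (fun i y => if i.2 = pol h i.1 then Real.exp (t * y) else 1)
    (fun i => ?_)
  · exact h2.congr (Filter.Eventually.of_forall fun ℓ => (key ℓ).symm)
  · by_cases hi : i.2 = pol h i.1
    · simpa [hi] using integrable_exp_gauss t
    · simpa [hi] using (integrable_const (1 : ℝ))

lemma integral_exp_S (h : B) (t : ℝ) :
    ∫ ℓ, Real.exp (t * ∑ x : X, ℓ (x, pol h x)) ∂(gaussianPerturbation X A)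
      = Real.exp (t ^ 2 * (Fintype.card X) / 2) := by
  classical
  have key : ∀ ℓ : (X × A) → ℝ, Real.exp (t * ∑ x : X, ℓ (x, pol h x))
      = ∏ i : X × A, (if i.2 = pol h i.1 then Real.exp (t * ℓ i) else 1) := by
    intro ℓ
    rw [Fintype.prod_prod_type]
    have : ∀ x : X, (∏ a : A, (if a = pol h x then Real.exp (t * ℓ (x, a)) else 1))
        = Real.exp (t * ℓ (x, pol h x)) := fun x => by
      rw [Finset.prod_eq_single (pol h x) (fun a _ ha => if_neg ha) (by simp)]
      simp
    simp_rw [this, ← Real.exp_sum, Finset.mul_sum]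
  simp_rw [key]
  rw [pi_integral (fun i y => if i.2 = pol h i.1 then Real.exp (t * y) else 1)]
  have h3 : ∀ i : X × A, (∫ x, (if i.2 = pol h i.1 then Real.exp (t * x) else 1)
      ∂(gaussianReal 0 1)) = (if i.2 = pol h i.1 then Real.exp (t ^ 2 / 2) else 1) := by
    intro i
    by_cases hi : i.2 = pol h i.1
    · simp only [if_pos hi]; exact integral_exp_gauss t
    · simp [hi]
  simp_rw [h3]
  rw [Fintype.prod_prod_type]
  have h4 : ∀ x : X, (∏ a : A, (if a = pol h x then Real.exp (t ^ 2 / 2) else 1))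
      = Real.exp (t ^ 2 / 2) := fun x => by
    rw [Finset.prod_eq_single (pol h x) (fun a _ ha => if_neg ha) (by simp)]
    simp
  simp_rw [h4, Finset.prod_const, Finset.card_univ, ← Real.exp_nat_mul]
  congr 1
  ring

/-! ### The max function -/

lemma measurable_F (Θ : B → ℝ) :
    Measurable (fun ℓ : (X × A) → ℝ => ⨆ hb : B, (Θ hb + ∑ x : X, ℓ (x, pol hb x))) := by
  have heq : (fun ℓ : (X × A) → ℝ => ⨆ hb : B, (Θ hb + ∑ x : X, ℓ (x, pol hb x)))
      = fun ℓ => Finset.univ.sup' Finset.univ_nonempty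
        (fun hb => (fun ℓ' : (X × A) → ℝ => Θ hb + ∑ x : X, ℓ' (x, pol hb x))) ℓ := by
    funext ℓ
    rw [Finset.sup'_apply, Finset.sup'_univ_eq_ciSup]
  rw [heq]
  exact Finset.measurable_sup' _ fun hb _ =>
    measurable_const.add (Finset.measurable_sum _ fun x _ => measurable_pi_apply (x, pol hb x))

lemma F_eq_some (Θ : B → ℝ) (ℓ : (X × A) → ℝ) :
    ∃ hb : B, (⨆ h' : B, (Θ h' + ∑ x : X, ℓ (x, pol h' x)))
      = Θ hb + ∑ x : X, ℓ (x, pol hb x) := by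
  obtain ⟨hb, _, hsup⟩ := Finset.exists_mem_eq_sup' (Finset.univ_nonempty (α := B))
    (fun h' : B => Θ h' + ∑ x : X, ℓ (x, pol h' x))
  exact ⟨hb, by rw [← Finset.sup'_univ_eq_ciSup, hsup]⟩

lemma le_F (Θ : B → ℝ) (ℓ : (X × A) → ℝ) (hb : B) :
    Θ hb + ∑ x : X, ℓ (x, pol hb x) ≤ ⨆ h' : B, (Θ h' + ∑ x : X, ℓ (x, pol h' x)) :=
  le_ciSup (f := fun h' : B => Θ h' + ∑ x : X, ℓ (x, pol h' x))
    (Set.Finite.bddAbove (Set.finite_range _)) hb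

lemma integrable_F (Θ : B → ℝ) :
    Integrable (fun ℓ : (X × A) → ℝ => ⨆ hb : B, (Θ hb + ∑ x : X, ℓ (x, pol hb x)))
      (gaussianPerturbation X A) := by
  have hg : Integrable (fun ℓ : (X × A) → ℝ => ∑ hb : B, |Θ hb + ∑ x : X, ℓ (x, pol hb x)|)
      (gaussianPerturbation X A) :=
    integrable_finset_sum _ fun hb _ => ((integrable_const (Θ hb)).add (integrable_S pol hb)).abs
  refine Integrable.mono' hg (measurable_F pol Θ).aestronglyMeasurable
    (Filter.Eventually.of_forall fun ℓ => ?_)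
  obtain ⟨hb, hs⟩ := F_eq_some pol Θ ℓ
  rw [Real.norm_eq_abs, hs]
  exact Finset.single_le_sum (f := fun h' : B => |Θ h' + ∑ x : X, ℓ (x, pol h' x)|)
    (fun h' _ => abs_nonneg _) (Finset.mem_univ hb)

lemma le_PhiN (Θ : B → ℝ) (hb : B) : Θ hb ≤ PhiN pol Θ := by
  have hint : Integrable (fun ℓ : (X × A) → ℝ => Θ hb + ∑ x : X, ℓ (x, pol hb x))
      (gaussianPerturbation X A) := (integrable_const (Θ hb)).add (integrable_S pol hb)
  have h1 : ∫ ℓ, (Θ hb + ∑ x : X, ℓ (x, pol hb x)) ∂(gaussianPerturbation X A) = Θ hb := by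
    rw [integral_add (integrable_const _) (integrable_S pol hb), integral_S pol hb,
      integral_const, probReal_univ]
    simp
  calc Θ hb = ∫ ℓ, (Θ hb + ∑ x : X, ℓ (x, pol hb x)) ∂(gaussianPerturbation X A) := h1.symm
    _ ≤ PhiN pol Θ := integral_mono hint (integrable_F pol Θ) fun ℓ => le_F pol Θ ℓ hb

/-! ### Bounds on `RN` -/

lemma RN_nonpos {u : B → ℝ} (hu : u ∈ stdSimplex ℝ B) : RN pol u ≤ 0 := by
  refine ciSup_le fun Θ => sub_nonpos.mpr ?_
  obtain ⟨hb, _, hsup⟩ := Finset.exists_mem_eq_sup' (Finset.univ_nonempty (α := B)) Θ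
  have hle : ∀ h' : B, Θ h' ≤ Θ hb := fun h' => hsup ▸ Finset.le_sup' Θ (Finset.mem_univ h')
  calc ∑ h' : B, Θ h' * u h' ≤ ∑ h' : B, Θ hb * u h' :=
        Finset.sum_le_sum fun h' _ => mul_le_mul_of_nonneg_right (hle h') (hu.1 h')
    _ = Θ hb * ∑ h' : B, u h' := by rw [Finset.mul_sum]
    _ = Θ hb := by rw [hu.2, mul_one]
    _ ≤ PhiN pol Θ := le_PhiN pol Θ hb

lemma bddAbove_RN_range {u : B → ℝ} (hu : u ∈ stdSimplex ℝ B) :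
    BddAbove (Set.range fun Θ : B → ℝ => ((∑ h : B, Θ h * u h) - PhiN pol Θ)) := by
  refine ⟨0, fun y hy => ?_⟩
  obtain ⟨Θ, rfl⟩ := hy
  refine sub_nonpos.mpr ?_
  obtain ⟨hb, _, hsup⟩ := Finset.exists_mem_eq_sup' (Finset.univ_nonempty (α := B)) Θ
  have hle : ∀ h' : B, Θ h' ≤ Θ hb := fun h' => hsup ▸ Finset.le_sup' Θ (Finset.mem_univ h')
  calc ∑ h' : B, Θ h' * u h' ≤ ∑ h' : B, Θ hb * u h' :=
        Finset.sum_le_sum fun h' _ => mul_le_mul_of_nonneg_right (hle h') (hu.1 h')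
    _ = Θ hb * ∑ h' : B, u h' := by rw [Finset.mul_sum]
    _ = Θ hb := by rw [hu.2, mul_one]
    _ ≤ PhiN pol Θ := le_PhiN pol Θ hb

lemma neg_PhiN_le_RN {u : B → ℝ} (hu : u ∈ stdSimplex ℝ B) :
    -(PhiN pol (0 : B → ℝ)) ≤ RN pol u := by
  have h := le_ciSup (bddAbove_RN_range pol hu) (0 : B → ℝ)
  simpa [RN] using h

/-! ### Chernoff bound on `PhiN pol 0` -/

lemma phiN_zero_le :
    PhiN pol (0 : B → ℝ)
      ≤ Real.sqrt (2 * (Fintype.card X) * Real.log (Fintype.card B)) := by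
  set γ := gaussianPerturbation X A with hγ
  set F : ((X × A) → ℝ) → ℝ :=
    fun ℓ => ⨆ hb : B, ((0 : B → ℝ) hb + ∑ x : X, ℓ (x, pol hb x)) with hF
  have hM : PhiN pol (0 : B → ℝ) = ∫ ℓ, F ℓ ∂γ := rfl
  set M := PhiN pol (0 : B → ℝ) with hMdef
  rcases eq_or_lt_of_le (Nat.succ_le_of_lt (Fintype.card_pos (α := B))) with hB1 | hB2
  · -- card B = 1
    obtain ⟨b, hb⟩ := Fintype.card_eq_one_iff.mp hB1.symm
    have hFs : ∀ ℓ, F ℓ = (0 : B → ℝ) b + ∑ x : X, ℓ (x, pol b x) := by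
      intro ℓ
      refine le_antisymm (ciSup_le fun h' => by rw [hb h']) (le_F pol 0 ℓ b)
    have : M = 0 := by
      rw [hM]
      simp_rw [hFs]
      simp only [Pi.zero_apply, zero_add]
      exact integral_S pol b
    rw [this]
    exact Real.sqrt_nonneg _
  · -- 2 ≤ card B
    set Xr : ℝ := ((Fintype.card X : ℕ) : ℝ) with hXr
    set L : ℝ := Real.log ((Fintype.card B : ℕ) : ℝ) with hL
    have hXrpos : 0 < Xr := by
      rw [hXr]; exact_mod_cast Fintype.card_pos
    have hBgt : (1 : ℝ) < ((Fintype.card B : ℕ) : ℝ) := by exact_mod_cast hB2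
    have hLpos : 0 < L := Real.log_pos hBgt
    set t : ℝ := Real.sqrt (2 * L / Xr) with htdef
    have ht : 0 < t := Real.sqrt_pos.mpr (by positivity)
    have ht2 : t ^ 2 = 2 * L / Xr := Real.sq_sqrt (by positivity)
    have hFint : Integrable F γ := integrable_F pol 0
    have htFint : Integrable (fun ℓ => t * F ℓ) γ := hFint.const_mul t
    have hGint : Integrable
        (fun ℓ : (X × A) → ℝ => ∑ hb : B, Real.exp (t * ∑ x : X, ℓ (x, pol hb x))) γ :=
      integrable_finset_sum _ fun hb _ => integrable_exp_S pol hb t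
    have hptbound : ∀ ℓ : (X × A) → ℝ, Real.exp (t * F ℓ)
        ≤ ∑ hb : B, Real.exp (t * ∑ x : X, ℓ (x, pol hb x)) := by
      intro ℓ
      obtain ⟨hb, hsb⟩ := F_eq_some pol 0 ℓ
      have : F ℓ = ∑ x : X, ℓ (x, pol hb x) := by
        simp only [hF]
        rw [hsb]
        simp
      rw [this]
      exact Finset.single_le_sum
        (f := fun h' : B => Real.exp (t * ∑ x : X, ℓ (x, pol h' x)))
        (fun h' _ => (Real.exp_pos _).le) (Finset.mem_univ hb)
    have hexpF : Integrable (fun ℓ => Real.exp (t * F ℓ)) γ := by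
      refine Integrable.mono' hGint
        (Real.measurable_exp.comp ((measurable_F pol 0).const_mul t)).aestronglyMeasurable
        (Filter.Eventually.of_forall fun ℓ => ?_)
      rw [Real.norm_eq_abs, abs_of_pos (Real.exp_pos _)]
      exact hptbound ℓ
    haveI : NeZero γ := ⟨IsProbabilityMeasure.ne_zero γ⟩
    have hjensen := convexOn_exp.map_average_le Real.continuous_exp.continuousOn
      isClosed_univ (Filter.Eventually.of_forall fun ℓ => Set.mem_univ _) htFint
      (by exact hexpF)
    rw [average_eq_integral, average_eq_integral, MeasureTheory.integral_const_mul _ _] at hjensen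
    -- hjensen : exp (t * ∫ F) ≤ ∫ exp (t * F)
    have hchain : ∫ ℓ, Real.exp (t * F ℓ) ∂γ
        ≤ ((Fintype.card B : ℕ) : ℝ) * Real.exp (t ^ 2 * Xr / 2) := by
      have h7 := integral_mono hexpF hGint hptbound
      rw [integral_finset_sum _ (fun hb _ => integrable_exp_S pol hb t)] at h7
      simp_rw [integral_exp_S pol _ t] at h7
      rwa [Finset.sum_const, Finset.card_univ, nsmul_eq_mul] at h7
    have hQpos : 0 < ((Fintype.card B : ℕ) : ℝ) * Real.exp (t ^ 2 * Xr / 2) := by positivity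
    have h5 : t * M ≤ L + t ^ 2 * Xr / 2 := by
      have hlog : t * M ≤ Real.log (((Fintype.card B : ℕ) : ℝ) * Real.exp (t ^ 2 * Xr / 2)) := by
        calc t * M = Real.log (Real.exp (t * M)) := (Real.log_exp _).symm
          _ ≤ _ := Real.log_le_log (Real.exp_pos _) (le_trans (by rw [hM]; exact hjensen) hchain)
      rwa [Real.log_mul (by positivity) (Real.exp_ne_zero _), Real.log_exp] at hlog
    have hhalf : t ^ 2 * Xr / 2 = L := by
      rw [ht2]; field_simp
    have h6 : M * t ≤ 2 * L := by
      rw [mul_comm]; rw [hhalf] at h5; linarith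
    have hM_le : M ≤ 2 * L / t := (le_div_iff₀ ht).mpr h6
    have hkey : t * Real.sqrt (2 * Xr * L) = 2 * L := by
      rw [htdef, ← Real.sqrt_mul (by positivity) (2 * Xr * L),
        show (2 * L / Xr) * (2 * Xr * L) = (2 * L) ^ 2 by field_simp]
      exact Real.sqrt_sq (by positivity)
    have hfin : 2 * L / t = Real.sqrt (2 * Xr * L) := by
      rw [← hkey, mul_comm t, mul_div_assoc, div_self ht.ne', mul_one]
    rw [hfin] at hM_le
    exact hM_le

end RNOsc

/-- `sup_{u∈Δ(ℬ)} R_𝒩(u) − inf_{u∈Δ(ℬ)} R_𝒩(u) ≤ √(2 X ln B)`. -/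
theorem RN_oscillation_le {X A B : Type*}
    [Fintype X] [Fintype A] [Fintype B]
    [Nonempty X] [Nonempty A] [Nonempty B]
    (pol : B → X → A) :
    sSup (RN pol '' stdSimplex ℝ B) - sInf (RN pol '' stdSimplex ℝ B)
      ≤ Real.sqrt (2 * (Fintype.card X) * Real.log (Fintype.card B)) := by
  classical
  set c := Real.sqrt (2 * (Fintype.card X) * Real.log (Fintype.card B)) with hc
  set s := RN pol '' stdSimplex ℝ B with hs
  have hu0 : (fun _ : B => (Fintype.card B : ℝ)⁻¹) ∈ stdSimplex ℝ B := by
    constructor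
    · intro x; positivity
    · rw [Finset.sum_const, Finset.card_univ, nsmul_eq_mul,
        mul_inv_cancel₀ (by exact_mod_cast Fintype.card_pos.ne')]
  have hne : s.Nonempty := ⟨_, Set.mem_image_of_mem _ hu0⟩
  have hub : ∀ y ∈ s, y ≤ 0 := by
    rintro y ⟨u, hu, rfl⟩
    exact RNOsc.RN_nonpos pol hu
  have hlb : ∀ y ∈ s, -c ≤ y := by
    rintro y ⟨u, hu, rfl⟩
    refine le_trans ?_ (RNOsc.neg_PhiN_le_RN pol hu)
    exact neg_le_neg (RNOsc.phiN_zero_le pol)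
  have h1 : sSup s ≤ 0 := csSup_le hne hub
  have h2 : -c ≤ sInf s := le_csInf hne hlb
  linarith
end

section
/- Under the Optimistic FTRL setup, Σ_{n=1}^N ⟨g_n, u_n⟩ − inf_{u∈Ω} Σ_{n=1}^N ⟨g_n, u⟩ ≤ (sup_{w∈Ω} R(w) − inf_{w∈Ω} R(w))/η + (1/η)·Σ_{n=1}^N [ D_{R*}(−ηΘ_n, −ηΘ̂_n) − D_{R*}(−ηΘ_{n−1}, −ηΘ̂_n) ]. -/
open Finset

/-- Cumulative loss vectors: `Θ_n = Σ_{i<n} g_i` (so `Θ_0 = 0`). -/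
noncomputable def ftrlCum {d : ℕ} (g : ℕ → (Fin d → ℝ)) (n : ℕ) : Fin d → ℝ :=
  ∑ i ∈ Finset.range n, g i

/-- Bregman divergence of `R*`: `D_{R*}(v, w) = R*(v) − R*(w) − ⟨v − w, ∇R*(w)⟩`,
where `Gstar = ∇R*`. -/
noncomputable def bregmanStar {d : ℕ} (Rstar : (Fin d → ℝ) → ℝ)
    (Gstar : (Fin d → ℝ) → (Fin d → ℝ)) (v w : Fin d → ℝ) : ℝ :=
  Rstar v - Rstar w - ∑ i, (v i - w i) * Gstar w i

/-- the Optimistic FTRL regret bound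
`Σ_n ⟨g_n, u_n⟩ − inf_{u∈Ω} Σ_n ⟨g_n, u⟩
  ≤ (sup_Ω R − inf_Ω R)/η + (1/η) Σ_n [D_{R*}(−ηΘ_n, −ηΘ̂_n) − D_{R*}(−ηΘ_{n−1}, −ηΘ̂_n)]`,
where `Θ̂_n = Θ_{n−1} + ĝ_n` and `u_n = ∇R*(−ηΘ̂_n)`. -/
theorem optimistic_ftrl_regret {d : ℕ}
    (Ω : Set (Fin d → ℝ)) (hΩ : Ω.Nonempty)
    (R : (Fin d → ℝ) → ℝ)
    (hconv : ConvexOn ℝ Ω R)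
    (hlsc : LowerSemicontinuousOn R Ω)
    (hbddA : BddAbove (R '' Ω)) (hbddB : BddBelow (R '' Ω))
    (Rstar : (Fin d → ℝ) → ℝ) (Gstar : (Fin d → ℝ) → (Fin d → ℝ))
    (hGmem : ∀ θ, Gstar θ ∈ Ω)
    (hattain : ∀ θ, Rstar θ = (∑ i, θ i * Gstar θ i) - R (Gstar θ))
    (hsup : ∀ θ, ∀ w ∈ Ω, (∑ i, θ i * w i) - R w ≤ Rstar θ)
    (η : ℝ) (hη : 0 < η) (N : ℕ) (g ghat : ℕ → Fin d → ℝ) :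
    (∑ n ∈ Finset.range N,
        ∑ i, g n i * Gstar ((-η) • (ftrlCum g n + ghat n)) i)
      - sInf ((fun u : Fin d → ℝ => ∑ n ∈ Finset.range N, ∑ i, g n i * u i) '' Ω)
    ≤ (sSup (R '' Ω) - sInf (R '' Ω)) / η
      + (1 / η) * ∑ n ∈ Finset.range N,
          (bregmanStar Rstar Gstar ((-η) • ftrlCum g (n + 1))
              ((-η) • (ftrlCum g n + ghat n))
            - bregmanStar Rstar Gstar ((-η) • ftrlCum g n)
                ((-η) • (ftrlCum g n + ghat n))) := by
  classical
  set θ : ℕ → Fin d → ℝ := fun n => (-η) • ftrlCum g n with hθ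
  set θh : ℕ → Fin d → ℝ := fun n => (-η) • (ftrlCum g n + ghat n) with hθh
  set S := sSup (R '' Ω) with hS
  set I := sInf (R '' Ω) with hI
  set L := ∑ n ∈ Finset.range N, ∑ i, g n i * Gstar (θh n) i with hL
  set DD := ∑ n ∈ Finset.range N,
      (bregmanStar Rstar Gstar (θ (n + 1)) (θh n)
        - bregmanStar Rstar Gstar (θ n) (θh n)) with hDD
  -- per-step identity
  have key : ∀ n, bregmanStar Rstar Gstar (θ (n+1)) (θh n)
      - bregmanStar Rstar Gstar (θ n) (θh n)
      = Rstar (θ (n+1)) - Rstar (θ n) + η * ∑ i, g n i * Gstar (θh n) i := by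
    intro n
    have hpt : ∀ i, θ (n+1) i = θ n i + (-η) * g n i := by
      intro i
      simp [hθ, ftrlCum, Finset.sum_apply, Finset.sum_range_succ, mul_add]
      ring
    have hs : ∑ i, (θ (n+1) i - θh n i) * Gstar (θh n) i
        - ∑ i, (θ n i - θh n i) * Gstar (θh n) i
        = -η * ∑ i, g n i * Gstar (θh n) i := by
      rw [← Finset.sum_sub_distrib, Finset.mul_sum]
      refine Finset.sum_congr rfl fun i _ => ?_
      rw [hpt i]; ring
    simp only [bregmanStar]
    linarith [hs]
  -- telescoping
  have htel : η * L = Rstar (θ 0) - Rstar (θ N) + DD := by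
    have h1 : DD = (∑ n ∈ Finset.range N, (Rstar (θ (n+1)) - Rstar (θ n))) + η * L := by
      rw [hDD, hL, Finset.mul_sum, ← Finset.sum_add_distrib]
      exact Finset.sum_congr rfl fun n _ => key n
    have h2 : ∑ n ∈ Finset.range N, (Rstar (θ (n+1)) - Rstar (θ n))
        = Rstar (θ N) - Rstar (θ 0) := Finset.sum_range_sub (fun n => Rstar (θ n)) N
    linarith [h1, h2]
  have hθ0 : θ 0 = 0 := by
    funext i; simp [hθ, ftrlCum]
  have hR0 : Rstar (θ 0) = - R (Gstar 0) := by
    rw [hθ0, hattain 0]; simp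
  have hIle : I ≤ R (Gstar 0) := csInf_le hbddB ⟨Gstar 0, hGmem 0, rfl⟩
  -- conclude
  rw [sub_le_iff_le_add, ← sub_le_iff_le_add']
  refine le_csInf (hΩ.image _) ?_
  rintro b ⟨u, hu, rfl⟩
  have hRu : R u ≤ S := le_csSup hbddA ⟨u, hu, rfl⟩
  set T := ∑ n ∈ Finset.range N, ∑ i, g n i * u i with hT
  have hTN : ∑ i, θ N i * u i = -η * T := by
    have h4 : ∀ i, θ N i * u i = ∑ n ∈ Finset.range N, -η * (g n i * u i) := by
      intro i
      have h5 : θ N i = ∑ n ∈ Finset.range N, -η * g n i := by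
        simp [hθ, ftrlCum, Finset.sum_apply, Finset.mul_sum]
      rw [h5, Finset.sum_mul]
      exact Finset.sum_congr rfl fun n _ => by ring
    calc ∑ i, θ N i * u i
        = ∑ i, ∑ n ∈ Finset.range N, -η * (g n i * u i) :=
          Finset.sum_congr rfl fun i _ => h4 i
      _ = ∑ n ∈ Finset.range N, ∑ i, -η * (g n i * u i) := Finset.sum_comm
      _ = -η * T := by
          rw [hT, Finset.mul_sum]
          exact Finset.sum_congr rfl fun n _ => by rw [Finset.mul_sum]
  have hRN : ∑ i, θ N i * u i - R u ≤ Rstar (θ N) := hsup _ u hu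
  have hmain : η * L ≤ S - I + η * T + DD := by
    rw [hTN] at hRN
    linarith [htel]
  have hgoal : η * (L - ((S - I) / η + 1 / η * DD)) = η * L - (S - I) - DD := by
    field_simp; ring
  rw [← mul_le_mul_iff_right₀ hη, hgoal]
  linarith [hmain]
end

section
/- If u* = (u*_x, u*_y) ∈ Δ_{2m} is an ε-approximate VI solution with ε = (4m² + 10m + 4)^{−6}, then ‖u*_x‖₁ · ‖u*_y‖₁ ≥ 2/9 (indeed ‖u*_x‖₁ ∈ [1/3, 2/3]). -/
/-- The vector field `θ(u) = (1/3)·C·u` with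
`C = [[54·1_{m×m}, −V], [−Wᵀ, 54·1_{m×m}]]`. -/
noncomputable def viField {m : ℕ} (V W : Matrix (Fin m) (Fin m) ℝ)
    (u : Fin m ⊕ Fin m → ℝ) : Fin m ⊕ Fin m → ℝ :=
  Sum.elim
    (fun i => (1 / 3) * (54 * (∑ j, u (Sum.inl j)) - ∑ j, V i j * u (Sum.inr j)))
    (fun j => (1 / 3) * (-(∑ i, W i j * u (Sum.inl i)) + 54 * ∑ i, u (Sum.inr i)))

set_option maxHeartbeats 1000000 in
/-- any `ε`-approximate VI solution `u* = (u*_x, u*_y) ∈ Δ_{2m}`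
with `ε = (4m² + 10m + 4)^{−6}` satisfies `‖u*_x‖₁·‖u*_y‖₁ ≥ 2/9`
(indeed `‖u*_x‖₁ ∈ [1/3, 2/3]`). -/
theorem vi_approx_solution_mass_bound (m : ℕ) (hm : 1 ≤ m)
    (V W : Matrix (Fin m) (Fin m) ℝ)
    (hV : ∀ i j, V i j ∈ Set.Icc (0:ℝ) 1)
    (hW : ∀ i j, W i j ∈ Set.Icc (0:ℝ) 1)
    (u : Fin m ⊕ Fin m → ℝ)
    (hu : u ∈ stdSimplex ℝ (Fin m ⊕ Fin m))
    (hVI : ∀ v ∈ stdSimplex ℝ (Fin m ⊕ Fin m),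
      -(((4 * (m : ℝ) ^ 2 + 10 * m + 4) ^ (6 : ℕ))⁻¹)
        ≤ ∑ k, viField V W u k * (v k - u k)) :
    2 / 9 ≤ (∑ i, u (Sum.inl i)) * (∑ j, u (Sum.inr j)) ∧
    (∑ i, u (Sum.inl i)) ∈ Set.Icc (1/3 : ℝ) (2/3 : ℝ) := by
  have hnn := hu.1
  set X := ∑ i, u (Sum.inl i) with hXdef
  set Y := ∑ j, u (Sum.inr j) with hYdef
  have hX0 : 0 ≤ X := Finset.sum_nonneg fun i _ => hnn _
  have hY0 : 0 ≤ Y := Finset.sum_nonneg fun j _ => hnn _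
  have hXY : X + Y = 1 := by
    have h := hu.2
    rw [Fintype.sum_sum_type] at h
    exact h
  set ε : ℝ := ((4 * (m : ℝ) ^ 2 + 10 * m + 4) ^ (6 : ℕ))⁻¹ with hεdef
  have hm1 : (1:ℝ) ≤ m := by exact_mod_cast hm
  have hb : (1:ℝ) ≤ 4 * (m:ℝ) ^ 2 + 10 * m + 4 := by nlinarith
  have hε1 : ε ≤ 1 := by
    rw [hεdef]
    have h1 : (1:ℝ) ≤ (4 * (m:ℝ) ^ 2 + 10 * m + 4) ^ (6:ℕ) := one_le_pow₀ hb
    rw [inv_le_one_iff₀]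
    right; exact h1
  -- bounds on double sums
  have hAle : ∀ i, (∑ j, V i j * u (Sum.inr j)) ≤ Y := by
    intro i
    apply Finset.sum_le_sum
    intro j _
    exact mul_le_of_le_one_left (hnn _) (hV i j).2
  have hA0 : ∀ i, 0 ≤ ∑ j, V i j * u (Sum.inr j) := by
    intro i
    exact Finset.sum_nonneg fun j _ => mul_nonneg (hV i j).1 (hnn _)
  have hBle : ∀ j, (∑ i, W i j * u (Sum.inl i)) ≤ X := by
    intro j
    apply Finset.sum_le_sum
    intro i _
    exact mul_le_of_le_one_left (hnn _) (hW i j).2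
  have hB0 : ∀ j, 0 ≤ ∑ i, W i j * u (Sum.inl i) := by
    intro j
    exact Finset.sum_nonneg fun i _ => mul_nonneg (hW i j).1 (hnn _)
  -- lower bound on S = ∑ θ k * u k
  set S := ∑ k, viField V W u k * u k with hSdef
  have hSsplit : S = (∑ i, viField V W u (Sum.inl i) * u (Sum.inl i))
      + ∑ j, viField V W u (Sum.inr j) * u (Sum.inr j) := by
    rw [hSdef, Fintype.sum_sum_type]
  have hSx : (1/3) * (54 * X - Y) * X ≤ ∑ i, viField V W u (Sum.inl i) * u (Sum.inl i) := by
    rw [hXdef, Finset.mul_sum]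
    apply Finset.sum_le_sum
    intro i _
    have h1 : (1/3 : ℝ) * (54 * X - Y) ≤ viField V W u (Sum.inl i) := by
      simp only [viField, Sum.elim_inl]
      have := hAle i
      rw [← hXdef]
      linarith
    exact mul_le_mul_of_nonneg_right h1 (hnn _)
  have hSy : (1/3) * (54 * Y - X) * Y ≤ ∑ j, viField V W u (Sum.inr j) * u (Sum.inr j) := by
    rw [hYdef, Finset.mul_sum]
    apply Finset.sum_le_sum
    intro j _
    have h1 : (1/3 : ℝ) * (54 * Y - X) ≤ viField V W u (Sum.inr j) := by
      simp only [viField, Sum.elim_inr]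
      have := hBle j
      rw [← hYdef]
      linarith
    exact mul_le_mul_of_nonneg_right h1 (hnn _)
  have hSlow : 18 * X^2 + 18 * Y^2 - (2/3) * (X*Y) ≤ S := by
    rw [hSsplit]; nlinarith [hSx, hSy]
  -- test vectors
  have i0 : Fin m := ⟨0, hm⟩
  have hupper : ∀ a : Fin m ⊕ Fin m, S ≤ viField V W u a + ε := by
    intro a
    have hv : (fun k => if k = a then (1:ℝ) else 0) ∈ stdSimplex ℝ (Fin m ⊕ Fin m) := by
      constructor
      · intro k; by_cases h : k = a <;> simp [h]
      · simp
    have h := hVI _ hv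
    have heq : (∑ k, viField V W u k * ((if k = a then (1:ℝ) else 0) - u k))
        = viField V W u a - S := by
      rw [hSdef]
      rw [show (∑ k, viField V W u k * ((if k = a then (1:ℝ) else 0) - u k))
          = (∑ k, viField V W u k * (if k = a then (1:ℝ) else 0))
            - ∑ k, viField V W u k * u k by
        rw [← Finset.sum_sub_distrib]; congr 1; ext k; ring]
      congr 1
      simp [mul_ite]
    rw [heq] at h
    linarith
  have hθx : viField V W u (Sum.inl i0) ≤ 18 * X := by
    simp only [viField, Sum.elim_inl]
    have := hA0 i0
    rw [← hXdef]
    linarith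
  have hθy : viField V W u (Sum.inr i0) ≤ 18 * Y := by
    simp only [viField, Sum.elim_inr]
    have := hB0 i0
    rw [← hYdef]
    linarith
  have hineq1 : 18 * X^2 + 18 * Y^2 - (2/3) * (X*Y) ≤ 18 * X + ε := by
    have := hupper (Sum.inl i0); linarith
  have hineq2 : 18 * X^2 + 18 * Y^2 - (2/3) * (X*Y) ≤ 18 * Y + ε := by
    have := hupper (Sum.inr i0); linarith
  have hXge : (1/3 : ℝ) ≤ X := by
    have hq : (272/9 : ℝ) * X ≥ 376/27 - ε := by nlinarith [sq_nonneg (X - 1/3)]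
    linarith
  have hYge : (1/3 : ℝ) ≤ Y := by
    have hq : (272/9 : ℝ) * Y ≥ 376/27 - ε := by nlinarith [sq_nonneg (Y - 1/3)]
    linarith
  refine ⟨?_, hXge, by linarith⟩
  nlinarith [mul_nonneg (sub_nonneg.2 hXge) (sub_nonneg.2 hYge)]
end

section
/- If u* = (u*_x, u*_y) ∈ Δ_{2m} is an ε-approximate VI solution with ε = (4m² + 10m + 4)^{−6}, then ‖u*_x‖₁ > 0 and ‖u*_y‖₁ > 0, and the normalized pair x̂ = u*_x/‖u*_x‖₁, ŷ = u*_y/‖u*_y‖₁ is an m^{−12}-approximate Nash equilibrium of the bimatrix game (V, W): for all x ∈ Δ_m, x̂ᵀ V ŷ ≥ xᵀ V ŷ − m^{−12}, and for all y ∈ Δ_m, x̂ᵀ W ŷ ≥ x̂ᵀ W y − m^{−12}. -/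
set_option maxHeartbeats 1600000


/-- any `ε`-approximate VI solution `u* = (u*_x, u*_y) ∈ Δ_{2m}`
with `ε = (4m² + 10m + 4)^{−6}` has `‖u*_x‖₁ > 0`, `‖u*_y‖₁ > 0`, and the
normalized pair `(x̂, ŷ) = (u*_x/‖u*_x‖₁, u*_y/‖u*_y‖₁)` is an
`m^{−12}`-approximate Nash equilibrium of the bimatrix game `(V, W)`. -/
theorem vi_approx_solution_yields_nash (m : ℕ) (hm : 1 ≤ m)
    (V W : Matrix (Fin m) (Fin m) ℝ)
    (hV : ∀ i j, V i j ∈ Set.Icc (0:ℝ) 1)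
    (hW : ∀ i j, W i j ∈ Set.Icc (0:ℝ) 1)
    (u : Fin m ⊕ Fin m → ℝ)
    (hu : u ∈ stdSimplex ℝ (Fin m ⊕ Fin m))
    (hVI : ∀ v ∈ stdSimplex ℝ (Fin m ⊕ Fin m),
      -(((4 * (m : ℝ) ^ 2 + 10 * m + 4) ^ (6 : ℕ))⁻¹)
        ≤ ∑ k, viField V W u k * (v k - u k)) :
    0 < (∑ i, u (Sum.inl i)) ∧ 0 < (∑ j, u (Sum.inr j)) ∧
    (∀ x ∈ stdSimplex ℝ (Fin m),
      (∑ i, ∑ j, x i * V i j * (u (Sum.inr j) / ∑ j', u (Sum.inr j')))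
          - (((m : ℝ) ^ (12 : ℕ))⁻¹)
        ≤ ∑ i, ∑ j, (u (Sum.inl i) / ∑ i', u (Sum.inl i')) * V i j
            * (u (Sum.inr j) / ∑ j', u (Sum.inr j'))) ∧
    (∀ y ∈ stdSimplex ℝ (Fin m),
      (∑ i, ∑ j, (u (Sum.inl i) / ∑ i', u (Sum.inl i')) * W i j * y j)
          - (((m : ℝ) ^ (12 : ℕ))⁻¹)
        ≤ ∑ i, ∑ j, (u (Sum.inl i) / ∑ i', u (Sum.inl i')) * W i j
            * (u (Sum.inr j) / ∑ j', u (Sum.inr j'))) := by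
  obtain ⟨hu1, hu2⟩ := hu
  set ε : ℝ := ((4 * (m : ℝ) ^ 2 + 10 * m + 4) ^ (6 : ℕ))⁻¹ with hεdef
  set a : ℝ := ∑ i, u (Sum.inl i) with hadef
  set b : ℝ := ∑ j, u (Sum.inr j) with hbdef
  have hm1 : (1:ℝ) ≤ (m:ℝ) := by exact_mod_cast hm
  have hX : (18:ℝ) ≤ 4 * (m : ℝ) ^ 2 + 10 * m + 4 := by nlinarith
  have hXpos : (0:ℝ) < (4 * (m : ℝ) ^ 2 + 10 * m + 4) ^ (6:ℕ) := by positivity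
  have hε0 : 0 < ε := by positivity
  have hε1 : ε ≤ 1/100 := by
    have h6 : (100:ℝ) ≤ (4 * (m : ℝ) ^ 2 + 10 * m + 4) ^ (6:ℕ) := by
      calc (100:ℝ) ≤ 18 ^ (6:ℕ) := by norm_num
        _ ≤ _ := pow_le_pow_left₀ (by norm_num) hX 6
    calc ε ≤ (100:ℝ)⁻¹ := inv_anti₀ (by norm_num) h6
      _ = 1/100 := by norm_num
  have hm12pos : (0:ℝ) < (m:ℝ) ^ (12:ℕ) := by positivity
  have hε48 : 48 * ε ≤ ((m:ℝ) ^ (12:ℕ))⁻¹ := by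
    have h4 : (4 * (m:ℝ)^2) ^ (6:ℕ) ≤ (4 * (m : ℝ) ^ 2 + 10 * m + 4) ^ (6:ℕ) :=
      pow_le_pow_left₀ (by positivity) (by nlinarith) 6
    have h5 : 48 * (m:ℝ) ^ (12:ℕ) ≤ (4 * (m : ℝ) ^ 2 + 10 * m + 4) ^ (6:ℕ) := by
      have : (4 * (m:ℝ)^2) ^ (6:ℕ) = 4096 * (m:ℝ) ^ (12:ℕ) := by ring
      nlinarith
    rw [hεdef, inv_eq_one_div, inv_eq_one_div, mul_one_div, div_le_div_iff₀ hXpos hm12pos]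
    linarith
  have ha0 : 0 ≤ a := Finset.sum_nonneg fun i _ => hu1 _
  have hb0 : 0 ≤ b := Finset.sum_nonneg fun j _ => hu1 _
  have hab : a + b = 1 := by
    rw [hadef, hbdef, ← Fintype.sum_sum_type]
    exact hu2
  -- the matrix-vector products
  set c : Fin m → ℝ := fun i => ∑ j, V i j * u (Sum.inr j) with hcdef
  set d : Fin m → ℝ := fun j => ∑ i, W i j * u (Sum.inl i) with hddef
  have hc0 : ∀ i, 0 ≤ c i := fun i =>
    Finset.sum_nonneg fun j _ => mul_nonneg (hV i j).1 (hu1 _)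
  have hcb : ∀ i, c i ≤ b := fun i => by
    rw [hbdef]
    exact Finset.sum_le_sum fun j _ => by
      nlinarith [(hV i j).1, (hV i j).2, hu1 (Sum.inr j)]
  have hd0 : ∀ j, 0 ≤ d j := fun j =>
    Finset.sum_nonneg fun i _ => mul_nonneg (hW i j).1 (hu1 _)
  have hda : ∀ j, d j ≤ a := fun j => by
    rw [hadef]
    exact Finset.sum_le_sum fun i _ => by
      nlinarith [(hW i j).1, (hW i j).2, hu1 (Sum.inl i)]
  set A : ℝ := ∑ i, c i * u (Sum.inl i) with hAdef
  set B : ℝ := ∑ j, d j * u (Sum.inr j) with hBdef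
  have hA0 : 0 ≤ A := Finset.sum_nonneg fun i _ => mul_nonneg (hc0 i) (hu1 _)
  have hAab : A ≤ b * a := by
    rw [hAdef, hadef, Finset.mul_sum]
    exact Finset.sum_le_sum fun i _ => mul_le_mul_of_nonneg_right (hcb i) (hu1 _)
  have hB0 : 0 ≤ B := Finset.sum_nonneg fun j _ => mul_nonneg (hd0 j) (hu1 _)
  have hBab : B ≤ a * b := by
    rw [hBdef, hbdef, Finset.mul_sum]
    exact Finset.sum_le_sum fun j _ => mul_le_mul_of_nonneg_right (hda j) (hu1 _)
  -- inner product of θ(u) with u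
  have hipL : ∑ i, viField V W u (Sum.inl i) * u (Sum.inl i) = 18 * a * a - (1/3) * A := by
    have : ∀ i ∈ Finset.univ, viField V W u (Sum.inl i) * u (Sum.inl i)
        = 18 * a * u (Sum.inl i) - (1/3) * (c i * u (Sum.inl i)) := fun i _ => by
      simp only [viField, Sum.elim_inl, ← hadef, ← hcdef]
      ring
    rw [Finset.sum_congr rfl this, Finset.sum_sub_distrib, ← Finset.mul_sum,
      ← Finset.mul_sum, ← hadef, ← hAdef]
  have hipR : ∑ j, viField V W u (Sum.inr j) * u (Sum.inr j) = 18 * b * b - (1/3) * B := by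
    have : ∀ j ∈ Finset.univ, viField V W u (Sum.inr j) * u (Sum.inr j)
        = 18 * b * u (Sum.inr j) - (1/3) * (d j * u (Sum.inr j)) := fun j _ => by
      simp only [viField, Sum.elim_inr, ← hbdef, ← hddef]
      ring
    rw [Finset.sum_congr rfl this, Finset.sum_sub_distrib, ← Finset.mul_sum,
      ← Finset.mul_sum, ← hbdef, ← hBdef]
  have hip : ∑ k, viField V W u k * u k
      = 18 * a * a - (1/3) * A + (18 * b * b - (1/3) * B) := by
    rw [Fintype.sum_sum_type, hipL, hipR]
  clear_value ε a b c d A B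
  have hc' : ∀ i, c i = ∑ j, V i j * u (Sum.inr j) := fun i => by rw [hcdef]
  have hd' : ∀ j, d j = ∑ i, W i j * u (Sum.inl i) := fun j => by rw [hddef]
  -- lower bound on a
  have hvert : ∀ k0 : Fin m ⊕ Fin m,
      -ε ≤ viField V W u k0 - ∑ k, viField V W u k * u k := by
    intro k0
    have hmem : (fun k => if k = k0 then (1:ℝ) else 0) ∈ stdSimplex ℝ (Fin m ⊕ Fin m) := by
      constructor
      · intro k; dsimp only; split <;> norm_num
      · simp
    have := hVI _ hmem
    simpa [mul_sub, Finset.sum_sub_distrib, mul_ite, Finset.sum_ite_eq'] using this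
  have ha4 : (1/4 : ℝ) ≤ a := by
    have h := hvert (Sum.inl ⟨0, hm⟩)
    have hθ : viField V W u (Sum.inl ⟨0, hm⟩) ≤ 18 * a := by
      have h0 := hc0 ⟨0, hm⟩
      rw [hcdef] at h0
      simp only [viField, Sum.elim_inl, ← hadef]
      linarith
    rw [hip] at h
    have key : 18 * a * a + 18 * b * b - (2/3) * (a * b) ≤ 18 * a + ε := by linarith
    have hb' : b = 1 - a := by linarith
    rw [hb'] at key
    nlinarith [key, sq_nonneg (1/4 - a), hε1]
  have hb4 : (1/4 : ℝ) ≤ b := by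
    have h := hvert (Sum.inr ⟨0, hm⟩)
    have hθ : viField V W u (Sum.inr ⟨0, hm⟩) ≤ 18 * b := by
      have h0 := hd0 ⟨0, hm⟩
      rw [hddef] at h0
      simp only [viField, Sum.elim_inr, ← hbdef]
      linarith
    rw [hip] at h
    have key : 18 * a * a + 18 * b * b - (2/3) * (a * b) ≤ 18 * b + ε := by linarith
    have ha' : a = 1 - b := by linarith
    rw [ha'] at key
    nlinarith [key, sq_nonneg (1/4 - b), hε1]
  have ha : (0:ℝ) < a := by linarith
  have hb : (0:ℝ) < b := by linarith
  have habpos : (0:ℝ) < a * b := mul_pos ha hb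
  refine ⟨ha, hb, ?_, ?_⟩
  · -- first Nash inequality
    intro x hx
    set S : ℝ := ∑ i, c i * x i with hSdef
    -- apply VI at v = (a·x, u_y)
    have hmem : (Sum.elim (fun i => a * x i) (fun j => u (Sum.inr j)))
        ∈ stdSimplex ℝ (Fin m ⊕ Fin m) := by
      constructor
      · rintro (i | j)
        · exact mul_nonneg ha0 (hx.1 i)
        · exact hu1 _
      · rw [Fintype.sum_sum_type]
        simp only [Sum.elim_inl, Sum.elim_inr]
        rw [← Finset.mul_sum, hx.2, ← hbdef]
        linarith
    have hkey : a * S ≤ A + 3 * ε := by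
      have h := hVI _ hmem
      have hsum : ∑ k, viField V W u k *
          (Sum.elim (fun i => a * x i) (fun j => u (Sum.inr j)) k - u k)
          = (1/3) * (A - a * S) := by
        rw [Fintype.sum_sum_type]
        simp only [Sum.elim_inl, Sum.elim_inr, sub_self, mul_zero, Finset.sum_const_zero,
          add_zero]
        have : ∀ i ∈ Finset.univ, viField V W u (Sum.inl i) * (a * x i - u (Sum.inl i))
            = (18 * a * (a * x i) - 18 * a * u (Sum.inl i))
              - ((1/3) * (c i * x i) * a - (1/3) * (c i * u (Sum.inl i))) := fun i _ => by
          simp only [viField, Sum.elim_inl, ← hadef, ← hc']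
          ring
        rw [Finset.sum_congr rfl this, Finset.sum_sub_distrib, Finset.sum_sub_distrib,
          Finset.sum_sub_distrib]
        simp only [← Finset.mul_sum, ← Finset.sum_mul]
        rw [← hadef, hx.2, ← hSdef, ← hAdef]
        ring
      rw [hsum] at h
      linarith
    have hL : ∑ i, ∑ j, x i * V i j * (u (Sum.inr j) / b) = S / b := by
      rw [hSdef, Finset.sum_div]
      refine Finset.sum_congr rfl fun i _ => ?_
      rw [hc' i, Finset.sum_mul, Finset.sum_div]
      exact Finset.sum_congr rfl fun j _ => by ring
    have hR : ∑ i, ∑ j, (u (Sum.inl i) / a) * V i j * (u (Sum.inr j) / b)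
        = A / (a * b) := by
      rw [hAdef, Finset.sum_div]
      refine Finset.sum_congr rfl fun i _ => ?_
      rw [hc' i, Finset.sum_mul, Finset.sum_div]
      exact Finset.sum_congr rfl fun j _ => by ring
    rw [hL, hR]
    have h1 : S / b ≤ (A + 3 * ε) / (a * b) := by
      rw [div_le_div_iff₀ hb habpos]
      nlinarith [mul_le_mul_of_nonneg_right hkey hb0]
    have h2 : (A + 3 * ε) / (a * b) = A / (a * b) + 3 * ε / (a * b) := add_div _ _ _
    have h3 : 3 * ε / (a * b) ≤ ((m:ℝ) ^ (12:ℕ))⁻¹ := by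
      have hab16 : (1/16 : ℝ) ≤ a * b := by nlinarith
      have : 3 * ε / (a * b) ≤ 48 * ε := by
        rw [div_le_iff₀ habpos]
        nlinarith [mul_le_mul_of_nonneg_left hab16 (by positivity : (0:ℝ) ≤ 48 * ε)]
      linarith
    linarith
  · -- second Nash inequality
    intro y hy
    set T : ℝ := ∑ j, d j * y j with hTdef
    have hmem : (Sum.elim (fun i => u (Sum.inl i)) (fun j => b * y j))
        ∈ stdSimplex ℝ (Fin m ⊕ Fin m) := by
      constructor
      · rintro (i | j)
        · exact hu1 _
        · exact mul_nonneg hb0 (hy.1 j)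
      · rw [Fintype.sum_sum_type]
        simp only [Sum.elim_inl, Sum.elim_inr]
        rw [← Finset.mul_sum, hy.2, ← hadef]
        linarith
    have hkey : b * T ≤ B + 3 * ε := by
      have h := hVI _ hmem
      have hsum : ∑ k, viField V W u k *
          (Sum.elim (fun i => u (Sum.inl i)) (fun j => b * y j) k - u k)
          = (1/3) * (B - b * T) := by
        rw [Fintype.sum_sum_type]
        simp only [Sum.elim_inl, Sum.elim_inr, sub_self, mul_zero, Finset.sum_const_zero,
          zero_add]
        have : ∀ j ∈ Finset.univ, viField V W u (Sum.inr j) * (b * y j - u (Sum.inr j))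
            = (18 * b * (b * y j) - 18 * b * u (Sum.inr j))
              - ((1/3) * (d j * y j) * b - (1/3) * (d j * u (Sum.inr j))) := fun j _ => by
          simp only [viField, Sum.elim_inr, ← hbdef, ← hd']
          ring
        rw [Finset.sum_congr rfl this, Finset.sum_sub_distrib, Finset.sum_sub_distrib,
          Finset.sum_sub_distrib]
        simp only [← Finset.mul_sum, ← Finset.sum_mul]
        rw [← hbdef, hy.2, ← hTdef, ← hBdef]
        ring
      rw [hsum] at h
      linarith
    have hL : ∑ i, ∑ j, (u (Sum.inl i) / a) * W i j * y j = T / a := by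
      rw [Finset.sum_comm, hTdef, Finset.sum_div]
      refine Finset.sum_congr rfl fun j _ => ?_
      rw [hd' j, Finset.sum_mul, Finset.sum_div]
      exact Finset.sum_congr rfl fun i _ => by ring
    have hR : ∑ i, ∑ j, (u (Sum.inl i) / a) * W i j * (u (Sum.inr j) / b)
        = B / (a * b) := by
      rw [Finset.sum_comm, hBdef, Finset.sum_div]
      refine Finset.sum_congr rfl fun j _ => ?_
      rw [hd' j, Finset.sum_mul, Finset.sum_div]
      exact Finset.sum_congr rfl fun i _ => by ring
    rw [hL, hR]
    have h1 : T / a ≤ (B + 3 * ε) / (a * b) := by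
      rw [div_le_div_iff₀ ha habpos]
      nlinarith [mul_le_mul_of_nonneg_right hkey ha0]
    have h2 : (B + 3 * ε) / (a * b) = B / (a * b) + 3 * ε / (a * b) := add_div _ _ _
    have h3 : 3 * ε / (a * b) ≤ ((m:ℝ) ^ (12:ℕ))⁻¹ := by
      have hab16 : (1/16 : ℝ) ≤ a * b := by nlinarith
      have : 3 * ε / (a * b) ≤ 48 * ε := by
        rw [div_le_iff₀ habpos]
        nlinarith [mul_le_mul_of_nonneg_left hab16 (by positivity : (0:ℝ) ≤ 48 * ε)]
      linarith
    linarith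
end

section
/- Let u* ∈ Δ(ℬ), let T ≥ 1, and let h_1, …, h_T be i.i.d. samples from the probability distribution u* on ℬ. Let u = (1/T)·Σ_{j=1}^T e_{h_j} ∈ Δ(ℬ) be the empirical average of the one-hot vectors e_{h_j}. Then for any δ ∈ (0,1], with probability at least 1 − δ over the draw of h_1, …, h_T, simultaneously for every s ∈ 𝒮: Σ_{a∈𝒜} |π_u(a|s) − π_{u*}(a|s)| ≤ √( 2·A·(ln S + ln(2/δ)) / T ). -/
open MeasureTheory

/-- The discrete probability measure on a finite type `B` with weights `u`. -/
noncomputable def discreteMeasure {B : Type*} [Fintype B] [MeasurableSpace B]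
    (u : B → ℝ) : Measure B :=
  ∑ h : B, ENNReal.ofReal (u h) • Measure.dirac h

lemma hoeffding_bernoulli (q : ℝ) (hq0 : 0 ≤ q) (hq1 : q ≤ 1) (l : ℝ) (hl : 0 ≤ l) :
    q * Real.exp l + (1 - q) ≤ Real.exp (l * q + l ^ 2 / 8) := by
  set D : ℝ → ℝ := fun x => q * Real.exp x + (1 - q) with hDdef
  have hDpos : ∀ x, 0 < D x := by
    intro x
    have he : 0 < Real.exp x := Real.exp_pos x
    simp only [hDdef]
    rcases lt_or_ge (Real.exp x) 1 with h | h
    · nlinarith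
    · nlinarith
  set φ : ℝ → ℝ := fun x => x * q + x ^ 2 / 8 - Real.log (D x) with hφdef
  set φ' : ℝ → ℝ := fun x => q + x / 4 - q * Real.exp x / D x with hφ'def
  have hDderiv : ∀ x, HasDerivAt D (q * Real.exp x) x := by
    intro x
    exact ((Real.hasDerivAt_exp x).const_mul q).add_const (1 - q)
  have hφderiv : ∀ x, HasDerivAt φ (φ' x) x := by
    intro x
    have h1 : HasDerivAt (fun x : ℝ => x * q) q x := by
      simpa using (hasDerivAt_id x).mul_const q
    have h2 : HasDerivAt (fun x : ℝ => x ^ 2 / 8) (x / 4) x := by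
      have := (hasDerivAt_pow 2 x).div_const 8
      exact this.congr_deriv (by ring)
    have h3 : HasDerivAt (fun x => Real.log (D x)) (q * Real.exp x / D x) x :=
      (hDderiv x).log (hDpos x).ne'
    exact (h1.add h2).sub h3
  have hφ'deriv : ∀ x, HasDerivAt φ' (1 / 4 - q * Real.exp x * (1 - q) / (D x) ^ 2) x := by
    intro x
    have h2 : HasDerivAt (fun x : ℝ => x / 4) (1 / 4) x := (hasDerivAt_id x).div_const 4
    have h3 : HasDerivAt (fun x => q * Real.exp x / D x)
        ((q * Real.exp x * D x - q * Real.exp x * (q * Real.exp x)) / (D x) ^ 2) x :=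
      ((Real.hasDerivAt_exp x).const_mul q).div (hDderiv x) (hDpos x).ne'
    have h4 : (q * Real.exp x * D x - q * Real.exp x * (q * Real.exp x)) / (D x) ^ 2
        = q * Real.exp x * (1 - q) / (D x) ^ 2 := by
      congr 1
      simp only [hDdef]
      ring
    rw [h4] at h3
    have := ((hasDerivAt_const x q).add h2).sub h3
    simp only [zero_add] at this
    exact this
  have hφ''nonneg : ∀ x, 0 ≤ 1 / 4 - q * Real.exp x * (1 - q) / (D x) ^ 2 := by
    intro x
    have hD := hDpos x
    have hsq : 0 < (D x) ^ 2 := by positivity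
    rw [sub_nonneg, div_le_iff₀ hsq]
    simp only [hDdef]
    nlinarith [sq_nonneg (q * Real.exp x - (1 - q))]
  have hφ'mono : MonotoneOn φ' (Set.Ici (0:ℝ)) := by
    apply monotoneOn_of_deriv_nonneg (convex_Ici 0)
    · exact HasDerivAt.continuousOn (fun x _ => hφ'deriv x)
    · exact fun x _ => (hφ'deriv x).differentiableAt.differentiableWithinAt
    · intro x _
      rw [(hφ'deriv x).deriv]
      exact hφ''nonneg x
  have hφ'0 : φ' 0 = 0 := by
    simp only [hφ'def, hDdef]
    simp
  have hφ'nonneg : ∀ x ∈ Set.Ici (0:ℝ), 0 ≤ φ' x := by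
    intro x hx
    have := hφ'mono (Set.self_mem_Ici) hx hx
    rw [hφ'0] at this
    exact this
  have hφmono : MonotoneOn φ (Set.Ici (0:ℝ)) := by
    apply monotoneOn_of_deriv_nonneg (convex_Ici 0)
    · exact HasDerivAt.continuousOn (fun x _ => hφderiv x)
    · exact fun x _ => (hφderiv x).differentiableAt.differentiableWithinAt
    · intro x hx
      rw [(hφderiv x).deriv]
      exact hφ'nonneg x (interior_subset hx)
  have hφ0 : φ 0 = 0 := by
    simp only [hφdef, hDdef]
    simp
  have hφl : 0 ≤ φ l := by
    have := hφmono Set.self_mem_Ici hl hl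
    rw [hφ0] at this
    exact this
  have hlog : Real.log (D l) ≤ l * q + l ^ 2 / 8 := by
    simp only [hφdef] at hφl
    linarith
  calc q * Real.exp l + (1 - q) = D l := rfl
    _ = Real.exp (Real.log (D l)) := (Real.exp_log (hDpos l)).symm
    _ ≤ Real.exp (l * q + l ^ 2 / 8) := Real.exp_le_exp.mpr hlog

lemma chernoff_sum {B : Type*} [Fintype B] (u g : B → ℝ)
    (hu0 : ∀ b, 0 ≤ u b) (husum : ∑ b, u b = 1)
    (hg : ∀ b, g b = 0 ∨ g b = 1) (T : ℕ) (t : ℝ) (ht : 0 ≤ t) :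
    ∑ ω ∈ Finset.univ.filter
        (fun ω : Fin T → B => (T:ℝ) * ((∑ b, u b * g b) + t) ≤ ∑ j, g (ω j)),
      ∏ j, u (ω j) ≤ Real.exp (-(2 * T * t ^ 2)) := by
  set q : ℝ := ∑ b, u b * g b with hqdef
  have hg01 : ∀ b, 0 ≤ g b ∧ g b ≤ 1 := by
    intro b; rcases hg b with h | h <;> simp [h]
  have hq0 : 0 ≤ q := Finset.sum_nonneg fun b _ => mul_nonneg (hu0 b) (hg01 b).1
  have hq1 : q ≤ 1 := by
    rw [hqdef, ← husum]
    exact Finset.sum_le_sum fun b _ => by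
      nlinarith [(hg01 b).2, hu0 b, (hg01 b).1]
  set l : ℝ := 4 * t with hldef
  have hl : 0 ≤ l := by positivity
  -- step 1: bound by exponential-weighted full sum
  have step1 : ∑ ω ∈ Finset.univ.filter
        (fun ω : Fin T → B => (T:ℝ) * (q + t) ≤ ∑ j, g (ω j)),
      ∏ j, u (ω j)
      ≤ ∑ ω : Fin T → B,
          Real.exp (-(l * (T * (q + t)))) * ∏ j, u (ω j) * Real.exp (l * g (ω j)) := by
    refine le_trans (Finset.sum_le_sum ?_) (Finset.sum_le_sum_of_subset_of_nonneg
      (Finset.filter_subset _ _) ?_)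
    · intro ω hω
      rw [Finset.mem_filter] at hω
      have h1 : (1:ℝ) ≤ Real.exp (l * (∑ j, g (ω j)) - l * (T * (q + t))) := by
        rw [← Real.exp_zero]
        apply Real.exp_le_exp.mpr
        nlinarith [hω.2]
      calc ∏ j, u (ω j) = 1 * ∏ j, u (ω j) := by ring
        _ ≤ Real.exp (l * (∑ j, g (ω j)) - l * (T * (q + t))) * ∏ j, u (ω j) := by
            apply mul_le_mul_of_nonneg_right h1
            exact Finset.prod_nonneg fun j _ => hu0 (ω j)
        _ = Real.exp (-(l * (T * (q + t)))) * ∏ j, u (ω j) * Real.exp (l * g (ω j)) := by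
            rw [Finset.mul_sum, sub_eq_add_neg, Real.exp_add, Real.exp_sum,
              Finset.prod_mul_distrib]
            ring
    · intro ω _ _
      apply mul_nonneg (Real.exp_pos _).le
      exact Finset.prod_nonneg fun j _ => mul_nonneg (hu0 (ω j)) (Real.exp_pos _).le
  -- step 2: factorize the full sum
  have step2 : ∑ ω : Fin T → B, ∏ j, u (ω j) * Real.exp (l * g (ω j))
      = (∑ b, u b * Real.exp (l * g b)) ^ T := by
    symm
    calc (∑ b, u b * Real.exp (l * g b)) ^ T
        = ∏ _j : Fin T, ∑ b, u b * Real.exp (l * g b) := by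
          rw [Finset.prod_const, Finset.card_univ, Fintype.card_fin]
      _ = ∑ ω ∈ Fintype.piFinset (fun _ : Fin T => (Finset.univ : Finset B)),
            ∏ j, u (ω j) * Real.exp (l * g (ω j)) :=
          Finset.prod_univ_sum _ _
      _ = ∑ ω : Fin T → B, ∏ j, u (ω j) * Real.exp (l * g (ω j)) := by
          rw [Fintype.piFinset_univ]
  -- step 3: mgf evaluation
  have step3 : ∑ b, u b * Real.exp (l * g b) = q * Real.exp l + (1 - q) := by
    have : ∀ b, u b * Real.exp (l * g b) = u b + (Real.exp l - 1) * (u b * g b) := by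
      intro b
      rcases hg b with h | h <;> simp [h] <;> ring
    rw [Finset.sum_congr rfl (fun b _ => this b), Finset.sum_add_distrib, husum,
      ← Finset.mul_sum, ← hqdef]
    ring
  have hbase_nonneg : 0 ≤ q * Real.exp l + (1 - q) := by
    nlinarith [Real.exp_pos l]
  have step4 : (q * Real.exp l + (1 - q)) ^ T ≤ Real.exp (l * q + l ^ 2 / 8) ^ T :=
    pow_le_pow_left₀ hbase_nonneg (hoeffding_bernoulli q hq0 hq1 l hl) T
  calc ∑ ω ∈ Finset.univ.filter
        (fun ω : Fin T → B => (T:ℝ) * (q + t) ≤ ∑ j, g (ω j)),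
      ∏ j, u (ω j)
      ≤ ∑ ω : Fin T → B,
          Real.exp (-(l * (T * (q + t)))) * ∏ j, u (ω j) * Real.exp (l * g (ω j)) := step1
    _ = Real.exp (-(l * (T * (q + t)))) * (q * Real.exp l + (1 - q)) ^ T := by
        rw [← Finset.mul_sum, step2, step3]
    _ ≤ Real.exp (-(l * (T * (q + t)))) * Real.exp (l * q + l ^ 2 / 8) ^ T := by
        apply mul_le_mul_of_nonneg_left step4 (Real.exp_pos _).le
    _ = Real.exp (-(l * (T * (q + t))) + T * (l * q + l ^ 2 / 8)) := by
        rw [← Real.exp_nat_mul, ← Real.exp_add]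
    _ ≤ Real.exp (-(2 * T * t ^ 2)) := by
        apply Real.exp_le_exp.mpr
        rw [hldef]
        nlinarith [sq_nonneg t, Nat.cast_nonneg (α := ℝ) T]


lemma sum_biUnion_le_nonneg {ι α : Type*} [DecidableEq α] (s : Finset ι)
    (t : ι → Finset α) (f : α → ℝ) (hf : ∀ a, 0 ≤ f a) :
    ∑ a ∈ s.biUnion t, f a ≤ ∑ i ∈ s, ∑ a ∈ t i, f a := by
  classical
  induction s using Finset.induction with
  | empty => simp
  | @insert i s hi ih =>
    rw [Finset.biUnion_insert, Finset.sum_insert hi]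
    have h1 : ∑ a ∈ (t i ∪ s.biUnion t), f a ≤ ∑ a ∈ t i, f a + ∑ a ∈ s.biUnion t, f a := by
      have := Finset.sum_union_inter (s₁ := t i) (s₂ := s.biUnion t) (f := f)
      have h2 : 0 ≤ ∑ a ∈ (t i ∩ s.biUnion t), f a := Finset.sum_nonneg fun a _ => hf a
      linarith
    exact le_trans h1 (by linarith)

lemma discreteMeasure_apply {B : Type*} [Fintype B] [MeasurableSpace B]
    [MeasurableSingletonClass B] (u : B → ℝ) (E : Set B) :
    discreteMeasure u E = ∑ h : B, ENNReal.ofReal (u h) * E.indicator 1 h := by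
  rw [discreteMeasure]
  rw [Measure.finset_sum_apply]
  simp [Measure.dirac_apply]

lemma discreteMeasure_singleton {B : Type*} [Fintype B] [MeasurableSpace B]
    [MeasurableSingletonClass B] [DecidableEq B] (u : B → ℝ) (x : B) :
    discreteMeasure u {x} = ENNReal.ofReal (u x) := by
  rw [discreteMeasure_apply]
  have : ∀ h : B, ENNReal.ofReal (u h) * ({x} : Set B).indicator 1 h
      = if h = x then ENNReal.ofReal (u h) else 0 := by
    intro h
    by_cases hh : h = x <;> simp [hh, Set.indicator]
  rw [Finset.sum_congr rfl fun h _ => this h, Finset.sum_ite_eq' Finset.univ x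
    (fun h => ENNReal.ofReal (u h))]
  simp

instance discreteMeasure_finite {B : Type*} [Fintype B] [MeasurableSpace B]
    [MeasurableSingletonClass B] (u : B → ℝ) : IsFiniteMeasure (discreteMeasure u) := by
  constructor
  rw [discreteMeasure_apply]
  simp only [Set.indicator_univ]
  have : ∀ h : B, ENNReal.ofReal (u h) * (1 : B → ENNReal) h = ENNReal.ofReal (u h) := by
    intro h; simp
  rw [Finset.sum_congr rfl fun h _ => this h]
  exact ENNReal.sum_lt_top.mpr fun _ _ => ENNReal.ofReal_lt_top

lemma pi_discrete_singleton {B : Type*} [Fintype B] [MeasurableSpace B]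
    [MeasurableSingletonClass B] [DecidableEq B] (u : B → ℝ) (T : ℕ) (f : Fin T → B) :
    (Measure.pi fun _ : Fin T => discreteMeasure u) {f}
      = ∏ j, ENNReal.ofReal (u (f j)) := by
  have h1 : ({f} : Set (Fin T → B)) = Set.pi Set.univ (fun j => {f j}) := by
    ext g
    simp [funext_iff]
  rw [h1, Measure.pi_pi]
  exact Finset.prod_congr rfl fun j _ => discreteMeasure_singleton u (f j)

lemma pi_discrete_apply {B : Type*} [Fintype B] [MeasurableSpace B]
    [MeasurableSingletonClass B] [DecidableEq B] (u : B → ℝ) (hu0 : ∀ b, 0 ≤ u b)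
    (T : ℕ) (E : Set (Fin T → B)) [DecidablePred (· ∈ E)] :
    (Measure.pi fun _ : Fin T => discreteMeasure u) E
      = ENNReal.ofReal (∑ ω ∈ Finset.univ.filter (· ∈ E), ∏ j, u (ω j)) := by
  have hE : E = ⋃ ω ∈ Finset.univ.filter (· ∈ E), ({ω} : Set (Fin T → B)) := by
    ext g
    simp
  rw [show (Measure.pi fun _ : Fin T => discreteMeasure u) E
      = (Measure.pi fun _ : Fin T => discreteMeasure u)
          (⋃ ω ∈ Finset.univ.filter (· ∈ E), ({ω} : Set (Fin T → B))) from by rw [← hE],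
    measure_biUnion_finset]
  · rw [Finset.sum_congr rfl fun ω _ => pi_discrete_singleton u T ω]
    rw [ENNReal.ofReal_sum_of_nonneg fun ω _ => Finset.prod_nonneg fun j _ => hu0 (ω j)]
    exact Finset.sum_congr rfl fun ω _ =>
      (ENNReal.ofReal_prod_of_nonneg fun j _ => hu0 (ω j)).symm
  · intro x _ y _ hxy
    simp [Set.disjoint_singleton, hxy]
  · intro ω _
    have h1 : ({ω} : Set (Fin T → B)) = Set.pi Set.univ (fun j => {ω j}) := by
      ext g
      simp [funext_iff]
    rw [h1]
    exact MeasurableSet.univ_pi fun j => measurableSet_singleton (ω j)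

lemma emp_collapse {S A B : Type*} [Fintype A] [Fintype B] [DecidableEq A] [DecidableEq B]
    (pol : B → S → A) (T : ℕ) (ω : Fin T → B) (s : S) (C : Finset A) :
    ∑ a ∈ C, ∑ h : B, ((∑ j : Fin T, if ω j = h then (1:ℝ) else 0) / T)
        * (if pol h s = a then (1:ℝ) else 0)
      = (∑ j : Fin T, if pol (ω j) s ∈ C then (1:ℝ) else 0) / T := by
  rw [Finset.sum_comm]
  have h1 : ∀ h : B, ∑ a ∈ C, ((∑ j : Fin T, if ω j = h then (1:ℝ) else 0) / T)
      * (if pol h s = a then (1:ℝ) else 0)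
      = ((∑ j : Fin T, if ω j = h then (1:ℝ) else 0) / T)
        * (if pol h s ∈ C then (1:ℝ) else 0) := by
    intro h
    rw [← Finset.mul_sum, Finset.sum_ite_eq C (pol h s) (fun _ => (1:ℝ))]
  rw [Finset.sum_congr rfl fun h _ => h1 h]
  have h2 : ∀ h : B, ((∑ j : Fin T, if ω j = h then (1:ℝ) else 0) / T)
      * (if pol h s ∈ C then (1:ℝ) else 0)
      = (∑ j : Fin T, if ω j = h then (if pol h s ∈ C then (1:ℝ) else 0) else 0) / T := by
    intro h
    rw [div_mul_eq_mul_div, Finset.sum_mul]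
    congr 1
    refine Finset.sum_congr rfl fun j _ => ?_
    by_cases hj : ω j = h <;> simp [hj]
  rw [Finset.sum_congr rfl fun h _ => h2 h, ← Finset.sum_div]
  congr 1
  rw [Finset.sum_comm]
  refine Finset.sum_congr rfl fun j _ => ?_
  rw [Finset.sum_ite_eq Finset.univ (ω j)
    (fun h => if pol h s ∈ C then (1:ℝ) else 0)]
  simp

lemma tru_collapse {S A B : Type*} [Fintype A] [Fintype B] [DecidableEq A]
    (pol : B → S → A) (u : B → ℝ) (s : S) (C : Finset A) :
    ∑ a ∈ C, ∑ h : B, u h * (if pol h s = a then (1:ℝ) else 0)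
      = ∑ h : B, u h * (if pol h s ∈ C then (1:ℝ) else 0) := by
  rw [Finset.sum_comm]
  exact Finset.sum_congr rfl fun h _ => by
    rw [← Finset.mul_sum, Finset.sum_ite_eq C (pol h s) (fun _ => (1:ℝ))]

lemma sum_prod_weights {B : Type*} [Fintype B] (u : B → ℝ) (hu1 : ∑ b, u b = 1) (T : ℕ) :
    ∑ ω : Fin T → B, ∏ j, u (ω j) = 1 := by
  calc ∑ ω : Fin T → B, ∏ j, u (ω j)
      = ∑ ω ∈ Fintype.piFinset (fun _ : Fin T => (Finset.univ : Finset B)),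
          ∏ j, u (ω j) := by rw [Fintype.piFinset_univ]
    _ = ∏ _j : Fin T, ∑ b, u b := (Finset.prod_univ_sum _ _).symm
    _ = 1 := by rw [hu1]; simp
/-- sparsification concentration. If `h_1, …, h_T` are i.i.d.
samples from `u* ∈ Δ(ℬ)` and `u` is the empirical average of the one-hot
vectors, then with probability at least `1 − δ`, simultaneously for every
state `s`, `‖π_u(·|s) − π_{u*}(·|s)‖₁ ≤ √(2A(ln S + ln(2/δ))/T)`. -/
theorem sparsification_concentration {S A B : Type*}
    [Fintype S] [Fintype A] [Fintype B]
    [Nonempty S] [Nonempty A]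
    [DecidableEq A] [DecidableEq B]
    [MeasurableSpace B] [MeasurableSingletonClass B]
    (pol : B → S → A)
    (ustar : B → ℝ) (hu : ustar ∈ stdSimplex ℝ B)
    (T : ℕ) (hT : 1 ≤ T)
    (δ : ℝ) (hδ : δ ∈ Set.Ioc (0:ℝ) 1) :
    ENNReal.ofReal (1 - δ)
      ≤ (Measure.pi fun _ : Fin T => discreteMeasure ustar)
          {ω : Fin T → B | ∀ s : S,
            ∑ a : A,
              |(∑ h : B, ((∑ j : Fin T, if ω j = h then (1:ℝ) else 0) / T)
                  * (if pol h s = a then (1:ℝ) else 0))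
                - (∑ h : B, ustar h * (if pol h s = a then (1:ℝ) else 0))|
            ≤ Real.sqrt (2 * (Fintype.card A)
                * (Real.log (Fintype.card S) + Real.log (2 / δ)) / T)} := by
  classical
  obtain ⟨hδ0, hδ1⟩ := hδ
  have hu0 : ∀ b, 0 ≤ ustar b := hu.1
  have hu1 : ∑ b, ustar b = 1 := hu.2
  have hT0 : (0:ℝ) < T := by exact_mod_cast Nat.lt_of_lt_of_le Nat.zero_lt_one hT
  have hAc : 1 ≤ Fintype.card A := Fintype.card_pos
  have hSc : 1 ≤ Fintype.card S := Fintype.card_pos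
  set Ac : ℕ := Fintype.card A with hAcdef
  set Sc : ℕ := Fintype.card S with hScdef
  set L : ℝ := Real.log (Sc : ℝ) + Real.log (2 / δ) with hLdef
  have hL0 : 0 ≤ L := add_nonneg (Real.log_nonneg (by exact_mod_cast hSc))
    (Real.log_nonneg (by rw [le_div_iff₀ hδ0]; linarith))
  set ε : ℝ := Real.sqrt (2 * (Ac : ℝ) * L / (T : ℝ)) with hεdef
  have hε0 : 0 ≤ ε := Real.sqrt_nonneg _
  have hε2 : ε ^ 2 = 2 * (Ac : ℝ) * L / T := Real.sq_sqrt (by positivity)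
  set E : Set (Fin T → B) := {ω : Fin T → B | ∀ s : S,
            ∑ a : A,
              |(∑ h : B, ((∑ j : Fin T, if ω j = h then (1:ℝ) else 0) / T)
                  * (if pol h s = a then (1:ℝ) else 0))
                - (∑ h : B, ustar h * (if pol h s = a then (1:ℝ) else 0))|
            ≤ ε} with hEdef
  rw [pi_discrete_apply ustar hu0 T E]
  apply ENNReal.ofReal_le_ofReal
  have hwpos : ∀ ω : Fin T → B, 0 ≤ ∏ j, ustar (ω j) :=
    fun ω => Finset.prod_nonneg fun j _ => hu0 (ω j)
  have htotal : ∑ ω : Fin T → B, ∏ j, ustar (ω j) = 1 := sum_prod_weights ustar hu1 T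
  have hsplit := Finset.sum_filter_add_sum_filter_not Finset.univ (· ∈ E)
    (fun ω : Fin T → B => ∏ j, ustar (ω j))
  rw [htotal] at hsplit
  suffices hbad : ∑ ω ∈ Finset.univ.filter (fun ω : Fin T → B => ¬ (ω ∈ E)),
      ∏ j, ustar (ω j) ≤ δ by linarith
  -- union bound over (s, C)
  set gfun : S → Finset A → B → ℝ := fun s C b => if pol b s ∈ C then (1:ℝ) else 0
    with hgdef
  set badF : S → Finset A → Finset (Fin T → B) := fun s C => Finset.univ.filter
    (fun ω : Fin T → B =>
      (T:ℝ) * ((∑ b, ustar b * gfun s C b) + ε/2) ≤ ∑ j, gfun s C (ω j)) with hbadFdef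
  have hsub : Finset.univ.filter (fun ω : Fin T → B => ¬ (ω ∈ E))
      ⊆ (Finset.univ : Finset (S × Finset A)).biUnion (fun p => badF p.1 p.2) := by
    intro ω hω
    rw [Finset.mem_filter, hEdef, Set.mem_setOf_eq] at hω
    push_neg at hω
    obtain ⟨s, hs⟩ := hω.2
    set x : A → ℝ := fun a =>
      (∑ h : B, ((∑ j : Fin T, if ω j = h then (1:ℝ) else 0) / T)
          * (if pol h s = a then (1:ℝ) else 0))
        - (∑ h : B, ustar h * (if pol h s = a then (1:ℝ) else 0)) with hxdef
    set C : Finset A := Finset.univ.filter (fun a => 0 < x a) with hCdef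
    have hempC := emp_collapse pol T ω s C
    have htruC := tru_collapse pol ustar s C
    have hempU := emp_collapse pol T ω s Finset.univ
    have htruU := tru_collapse pol ustar s Finset.univ
    have hsum0 : ∑ a : A, x a = 0 := by
      rw [hxdef]
      rw [Finset.sum_sub_distrib, hempU, htruU]
      simp only [Finset.mem_univ, if_true]
      rw [Finset.sum_const, Finset.card_univ, Fintype.card_fin]
      have : ∑ h : B, ustar h * 1 = 1 := by simpa using hu1
      rw [this]
      field_simp
      simp
    have habs : ∑ a : A, |x a| = 2 * ∑ a ∈ C, x a := by
      have d1 := Finset.sum_filter_add_sum_filter_not Finset.univ (fun a => 0 < x a)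
        (fun a => |x a|)
      have d2 := Finset.sum_filter_add_sum_filter_not Finset.univ (fun a => 0 < x a) x
      have e1 : ∑ a ∈ C, |x a| = ∑ a ∈ C, x a := by
        refine Finset.sum_congr rfl fun a ha => ?_
        rw [Finset.mem_filter] at ha
        exact abs_of_pos ha.2
      have e2 : ∑ a ∈ Finset.univ.filter (fun a => ¬ 0 < x a), |x a|
          = - ∑ a ∈ Finset.univ.filter (fun a => ¬ 0 < x a), x a := by
        rw [← Finset.sum_neg_distrib]
        refine Finset.sum_congr rfl fun a ha => ?_
        rw [Finset.mem_filter] at ha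
        exact abs_of_nonpos (not_lt.mp ha.2)
      rw [hCdef]
      linarith [d1, d2, e1, e2, hsum0]
    have hgt : ε / 2 < ∑ a ∈ C, x a := by
      have hs' : ε < ∑ a : A, |x a| := hs
      linarith
    have hxC : ∑ a ∈ C, x a
        = (∑ j : Fin T, gfun s C (ω j)) / T - ∑ b, ustar b * gfun s C b := by
      rw [hxdef]
      rw [Finset.sum_sub_distrib, hempC, htruC]
    rw [Finset.mem_biUnion]
    refine ⟨(s, C), Finset.mem_univ _, ?_⟩
    rw [hbadFdef]
    simp only [Finset.mem_filter, Finset.mem_univ, true_and]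
    rw [hxC] at hgt
    rw [div_sub' (ne_of_gt hT0)] at hgt
    · rw [lt_div_iff₀ hT0] at hgt
      nlinarith
  calc ∑ ω ∈ Finset.univ.filter (fun ω : Fin T → B => ¬ (ω ∈ E)), ∏ j, ustar (ω j)
      ≤ ∑ ω ∈ (Finset.univ : Finset (S × Finset A)).biUnion (fun p => badF p.1 p.2),
          ∏ j, ustar (ω j) :=
        Finset.sum_le_sum_of_subset_of_nonneg hsub fun ω _ _ => hwpos ω
    _ ≤ ∑ p : S × Finset A, ∑ ω ∈ badF p.1 p.2, ∏ j, ustar (ω j) :=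
        sum_biUnion_le_nonneg _ _ _ hwpos
    _ ≤ ∑ _p : S × Finset A, Real.exp (-(2 * T * (ε/2) ^ 2)) := by
        refine Finset.sum_le_sum fun p _ => ?_
        exact chernoff_sum ustar (gfun p.1 p.2) hu0 hu1
          (fun b => by by_cases h : pol b p.1 ∈ p.2 <;> simp [hgdef, h])
          T (ε/2) (by positivity)
    _ = (Sc * 2 ^ Ac : ℝ) * Real.exp (-(2 * T * (ε/2) ^ 2)) := by
        rw [Finset.sum_const, Finset.card_univ, Fintype.card_prod, Fintype.card_finset,
          nsmul_eq_mul]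
        push_cast
        ring
    _ ≤ δ := by
        have hexp : -(2 * (T:ℝ) * (ε/2) ^ 2) = (Ac : ℝ) * (-L) := by
          have : (ε/2) ^ 2 = ε ^ 2 / 4 := by ring
          rw [this, hε2]
          field_simp
          ring
        rw [hexp, Real.exp_nat_mul]
        have hScpos : (0:ℝ) < Sc := by
          have : (1:ℝ) ≤ Sc := by exact_mod_cast hSc
          linarith
        have hexpL : Real.exp (-L) = δ / (2 * Sc) := by
          rw [hLdef, neg_add, Real.exp_add, Real.exp_neg, Real.exp_neg,
            Real.exp_log hScpos, Real.exp_log (by positivity : (0:ℝ) < 2/δ)]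
          rw [inv_div]
          field_simp
        rw [hexpL]
        have key : (δ / (2 * (Sc:ℝ))) ^ Ac * 2 ^ Ac = (δ / Sc) ^ Ac := by
          rw [← mul_pow]
          congr 1
          field_simp
        have hbase1 : δ / (Sc:ℝ) ≤ 1 := by
          rw [div_le_one hScpos]
          have : (1:ℝ) ≤ Sc := by exact_mod_cast hSc
          linarith
        have hbase0 : 0 ≤ δ / (Sc:ℝ) := by positivity
        have hpow : (δ/(Sc:ℝ))^Ac ≤ δ/Sc := by
          have := pow_le_pow_of_le_one hbase0 hbase1 hAc
          simpa using this
        calc ((Sc:ℝ) * 2 ^ Ac) * (δ / (2*Sc)) ^ Ac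
            = Sc * ((δ/(2*(Sc:ℝ)))^Ac * 2^Ac) := by ring
          _ = Sc * (δ/Sc)^Ac := by rw [key]
          _ ≤ Sc * (δ/Sc) := mul_le_mul_of_nonneg_left hpow hScpos.le
          _ = δ := by field_simp
end
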